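/- arXiv:1508.07931 — 5 statements merged into one kernel-verified Lean document; each statement's English description precedes it below -/
import Mathlib

section
/- For a uniformly random permutation R of {1,...,N}, given indices d < i < j, the probability that min over {1,...,i-1} of R is attained in {1,...,d}, and R(i) > R(i+1) > ... > R(j-1) forms a strictly decreasing (improving) run with each R(x) a left-to-right minimum for i ≤ x ≤ j-1, equals d·(i-2)!/(j-1)!. -/
open Finset Equiv

namespace Stmt4Aux

/-- weight of a coordinate constraint: `1` = must be prefix-min, `2` = must not be, else free -/
def w (v s : ℕ) : ℕ := if v = 1 then 1 else if v = 2 then s - 1 else s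

/-- `Sat c σ`: at each position `p`, if `c p = 1` then `σ p` is smaller than all later values;
if `c p = 2` then some later value is smaller. -/
def Sat (c : ℕ → ℕ) {M : ℕ} (σ : Equiv.Perm (Fin M)) : Prop :=
  ∀ p : Fin M,
    (c p = 1 → ∀ m : Fin M, p < m → σ p < σ m) ∧
    (c p = 2 → ∃ m : Fin M, p < m ∧ σ m < σ p)

variable {M : ℕ}

/-- residual permutation after removing position 0 (order-preserving relabelling of values) -/
def res (σ : Equiv.Perm (Fin (M + 1))) : Equiv.Perm (Fin M) :=
  Equiv.removeNone ((finSuccEquiv' 0).symm.trans (σ.trans (finSuccEquiv' (σ 0))))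

lemma res_spec (σ : Equiv.Perm (Fin (M + 1))) (k : Fin M) :
    (σ 0).succAbove (res σ k) = σ k.succ := by
  obtain ⟨y, hy⟩ := Fin.exists_succAbove_eq (x := σ k.succ) (y := σ 0)
    (by simp [σ.injective.ne_iff, Fin.succ_ne_zero])
  have he : ((finSuccEquiv' 0).symm.trans (σ.trans (finSuccEquiv' (σ 0)))) (some k) = some y := by
    simp only [Equiv.trans_apply, finSuccEquiv'_symm_some, Fin.succAbove_zero_apply]
    rw [← hy, Equiv.apply_eq_iff_eq_symm_apply, finSuccEquiv'_symm_some]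
  have := Equiv.removeNone_some _ ⟨y, he⟩
  rw [he] at this
  have : res σ k = y := Option.some_injective _ this
  rw [this, hy]

/-- rebuild a permutation of `Fin (M+1)` from the value at 0 and the residual permutation -/
def build (v : Fin (M + 1)) (e : Equiv.Perm (Fin M)) : Equiv.Perm (Fin (M + 1)) :=
  (finSuccEquiv' 0).trans ((Equiv.optionCongr e).trans (finSuccEquiv' v).symm)

@[simp] lemma build_zero (v : Fin (M + 1)) (e : Equiv.Perm (Fin M)) : build v e 0 = v := by
  simp [build, finSuccEquiv'_at, finSuccEquiv'_symm_none]

@[simp] lemma build_succ (v : Fin (M + 1)) (e : Equiv.Perm (Fin M)) (k : Fin M) :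
    build v e k.succ = v.succAbove (e k) := by
  have h0 : finSuccEquiv' (0 : Fin (M + 1)) k.succ = some k := by
    rw [Equiv.apply_eq_iff_eq_symm_apply, finSuccEquiv'_symm_some, Fin.succAbove_zero_apply]
  simp [build, h0, finSuccEquiv'_symm_some]

lemma build_res (σ : Equiv.Perm (Fin (M + 1))) : build (σ 0) (res σ) = σ := by
  ext m
  induction m using Fin.cases with
  | zero => simp
  | succ k => simp [res_spec]

lemma res_build (v : Fin (M + 1)) (e : Equiv.Perm (Fin M)) : res (build v e) = e := by
  ext k
  have h := res_spec (build v e) k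
  rw [build_succ, build_zero] at h
  exact Fin.ext_iff.mp (Fin.succAbove_right_inj.mp h)

end Stmt4Aux

namespace Stmt4Aux

open scoped Classical

variable {M : ℕ}

lemma zero_one_iff (σ : Equiv.Perm (Fin (M + 1))) :
    (∀ m : Fin (M + 1), 0 < m → σ 0 < σ m) ↔ σ 0 = 0 := by
  constructor
  · intro h
    by_contra h0
    have hm : σ.symm 0 ≠ 0 := by
      intro hc
      exact h0 (by simpa using (congrArg σ hc).symm)
    have := h (σ.symm 0) (Fin.pos_iff_ne_zero.mpr hm)
    rw [Equiv.apply_symm_apply] at this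
    exact absurd this (by simp [Fin.not_lt, Fin.zero_le])
  · intro h m hm
    rw [h]
    refine Fin.pos_iff_ne_zero.mpr ?_
    rw [← h, Ne, σ.injective.eq_iff]
    exact Fin.ne_of_gt hm

lemma zero_two_iff (σ : Equiv.Perm (Fin (M + 1))) :
    (∃ m : Fin (M + 1), 0 < m ∧ σ m < σ 0) ↔ σ 0 ≠ 0 := by
  constructor
  · rintro ⟨m, _, hlt⟩ h0
    rw [h0] at hlt
    exact absurd hlt (by simp [Fin.not_lt, Fin.zero_le])
  · intro h0
    refine ⟨σ.symm 0, ?_, ?_⟩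
    · exact Fin.pos_iff_ne_zero.mpr fun hc => h0 (by simpa using (congrArg σ hc).symm)
    · rw [Equiv.apply_symm_apply]
      exact Fin.pos_iff_ne_zero.mpr h0

lemma succ_one_iff (σ : Equiv.Perm (Fin (M + 1))) (k : Fin M) :
    (∀ m : Fin (M + 1), k.succ < m → σ k.succ < σ m)
      ↔ (∀ m' : Fin M, k < m' → res σ k < res σ m') := by
  constructor
  · intro h m' hm'
    have := h m'.succ (by rwa [Fin.succ_lt_succ_iff])
    rw [← res_spec, ← res_spec] at this
    exact Fin.succAbove_lt_succAbove_iff.mp this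
  · intro h m hm
    induction m using Fin.cases with
    | zero => exact absurd hm (by simp [Fin.not_lt, Fin.zero_le])
    | succ m' =>
      rw [← res_spec, ← res_spec]
      exact Fin.succAbove_lt_succAbove_iff.mpr (h m' (by rwa [← Fin.succ_lt_succ_iff]))

lemma succ_two_iff (σ : Equiv.Perm (Fin (M + 1))) (k : Fin M) :
    (∃ m : Fin (M + 1), k.succ < m ∧ σ m < σ k.succ)
      ↔ (∃ m' : Fin M, k < m' ∧ res σ m' < res σ k) := by
  constructor
  · rintro ⟨m, hm, hlt⟩
    induction m using Fin.cases with
    | zero => exact absurd hm (by simp [Fin.not_lt, Fin.zero_le])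
    | succ m' =>
      refine ⟨m', by rwa [← Fin.succ_lt_succ_iff], ?_⟩
      rw [← res_spec, ← res_spec] at hlt
      exact Fin.succAbove_lt_succAbove_iff.mp hlt
  · rintro ⟨m', hm', hlt⟩
    refine ⟨m'.succ, by rwa [Fin.succ_lt_succ_iff], ?_⟩
    rw [← res_spec, ← res_spec]
    exact Fin.succAbove_lt_succAbove_iff.mpr hlt

lemma sat_succ_iff (c : ℕ → ℕ) (σ : Equiv.Perm (Fin (M + 1))) :
    Sat c σ ↔ ((c 0 = 1 → σ 0 = 0) ∧ (c 0 = 2 → σ 0 ≠ 0))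
      ∧ Sat (fun n => c (n + 1)) (res σ) := by
  constructor
  · intro h
    refine ⟨⟨fun h1 => (zero_one_iff σ).mp ((h 0).1 h1),
            fun h2 => (zero_two_iff σ).mp ((h 0).2 h2)⟩, fun k => ?_⟩
    refine ⟨fun h1 => (succ_one_iff σ k).mp ((h k.succ).1 (by simpa using h1)) ,
            fun h2 => (succ_two_iff σ k).mp ((h k.succ).2 (by simpa using h2))⟩
  · rintro ⟨⟨h1, h2⟩, hs⟩ p
    induction p using Fin.cases with
    | zero =>
      exact ⟨fun hc => (zero_one_iff σ).mpr (h1 hc),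
             fun hc => (zero_two_iff σ).mpr (h2 hc)⟩
    | succ k =>
      refine ⟨fun hc => (succ_one_iff σ k).mpr ((hs k).1 (by simpa using hc)),
              fun hc => (succ_two_iff σ k).mpr ((hs k).2 (by simpa using hc))⟩

lemma count : ∀ (M : ℕ) (c : ℕ → ℕ),
    ((Finset.univ : Finset (Equiv.Perm (Fin M))).filter (fun σ => Sat c σ)).card
      = ∏ p ∈ Finset.range M, w (c p) (M - p) := by
  intro M
  induction M with
  | zero =>
    intro c
    have h : ∀ σ : Equiv.Perm (Fin 0), Sat c σ := fun σ p => p.elim0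
    rw [Finset.filter_true_of_mem fun σ _ => h σ]
    simp
  | succ M ih =>
    intro c
    set A : Finset (Fin (M + 1)) :=
      if c 0 = 1 then {0} else if c 0 = 2 then Finset.univ.erase 0 else Finset.univ with hA
    have hmemA : ∀ v : Fin (M + 1), v ∈ A ↔ ((c 0 = 1 → v = 0) ∧ (c 0 = 2 → v ≠ 0)) := by
      intro v
      rw [hA]
      split_ifs with h1 h2
      · simp [h1]
      · simp [h1, h2]
      · simp [h1, h2]
    have hcardA : A.card = w (c 0) (M + 1) := by
      rw [hA]
      unfold w
      split_ifs with h1 h2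
      · simp
      · simp [Finset.card_erase_of_mem, Finset.card_univ]
      · simp
    have hbij :
        ((Finset.univ : Finset (Equiv.Perm (Fin (M + 1)))).filter (fun σ => Sat c σ)).card
          = (A ×ˢ ((Finset.univ : Finset (Equiv.Perm (Fin M))).filter
              (fun e => Sat (fun n => c (n + 1)) e))).card := by
      refine Finset.card_nbij' (fun σ => (σ 0, res σ)) (fun x => build x.1 x.2) ?_ ?_ ?_ ?_
      · intro σ hσ
        rw [Finset.mem_coe, Finset.mem_filter] at hσ
        obtain ⟨h0, hs⟩ := (sat_succ_iff c σ).mp hσ.2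
        rw [Finset.mem_coe, Finset.mem_product]
        exact ⟨(hmemA _).mpr h0, Finset.mem_filter.mpr ⟨Finset.mem_univ _, hs⟩⟩
      · rintro ⟨v, e⟩ hve
        rw [Finset.mem_coe, Finset.mem_product, Finset.mem_filter] at hve
        rw [Finset.mem_coe, Finset.mem_filter]
        refine ⟨Finset.mem_univ _, (sat_succ_iff c _).mpr ?_⟩
        rw [build_zero, res_build]
        exact ⟨(hmemA v).mp hve.1, hve.2.2⟩
      · intro σ _
        exact build_res σ
      · rintro ⟨v, e⟩ _
        simp [res_build]
    rw [hbij, Finset.card_product, hcardA, ih (fun n => c (n + 1)),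
      Finset.prod_range_succ' (fun p => w (c p) (M + 1 - p))]
    simp only [Nat.succ_sub_succ_eq_sub, Nat.sub_zero]
    ring

end Stmt4Aux

namespace Stmt4Aux

/-- the constraint pattern for the reversed permutation -/
def cc (N d i j p : ℕ) : ℕ :=
  if N + 1 - j ≤ p ∧ p ≤ N - i then 1
  else if N + 1 - i ≤ p ∧ p ≤ N - 1 - d then 2 else 0

lemma A_equiv {N d i : ℕ} (hd : 1 ≤ d) (hdi : d < i) (hiN : i ≤ N) (σ : Equiv.Perm (Fin N))
    (h : ∀ m : Fin N, d ≤ (m : ℕ) → (m : ℕ) < i - 1 →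
      ∃ l : Fin N, (l : ℕ) < (m : ℕ) ∧ σ l < σ m) :
    ∀ m : Fin N, d ≤ (m : ℕ) → (m : ℕ) < i - 1 → ∃ l : Fin N, (l : ℕ) < d ∧ σ l < σ m := by
  have hN : 0 < N := by omega
  set S : Finset (Fin N) := Finset.univ.filter (fun t : Fin N => (t : ℕ) < i - 1) with hS
  have hne : S.Nonempty := ⟨⟨0, hN⟩, by simp [hS]; omega⟩
  obtain ⟨l₀, hl₀S, hmin⟩ := Finset.exists_min_image S σ hne
  have hl₀i : (l₀ : ℕ) < i - 1 := by
    have := Finset.mem_filter.mp hl₀S; exact this.2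
  have hl₀d : (l₀ : ℕ) < d := by
    by_contra hge
    obtain ⟨l, hl, hlt⟩ := h l₀ (by omega) hl₀i
    have hlS : l ∈ S := Finset.mem_filter.mpr ⟨Finset.mem_univ _, by omega⟩
    exact absurd (hmin l hlS) (not_le.mpr hlt)
  intro m hm1 hm2
  refine ⟨l₀, hl₀d, ?_⟩
  have hle := hmin m (Finset.mem_filter.mpr ⟨Finset.mem_univ _, hm2⟩)
  refine lt_of_le_of_ne hle fun hc => ?_
  have : l₀ = m := σ.injective hc
  omega

lemma orig_iff (N d i j : ℕ) (hd : 1 ≤ d) (hdi : d < i) (hij : i < j) (hjN : j ≤ N)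
    (σ : Equiv.Perm (Fin N)) :
    ((∀ m : Fin N, d ≤ (m : ℕ) → (m : ℕ) < i - 1 →
        ∃ l : Fin N, (l : ℕ) < d ∧ σ l < σ m) ∧
      (∀ (x : ℕ) (_hx1 : i ≤ x) (_hx2 : x ≤ j - 1),
        ∀ m : Fin N, (m : ℕ) < x - 1 → σ ⟨x - 1, Nat.lt_of_lt_of_le (by omega) hjN⟩ < σ m))
      ↔ Sat (cc N d i j) (σ * Fin.revPerm) := by
  constructor
  · rintro ⟨hA, hB⟩ p
    constructor
    · intro h1 m hpm
      have hc : N + 1 - j ≤ (p : ℕ) ∧ (p : ℕ) ≤ N - i := by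
        unfold cc at h1; split_ifs at h1 with ha hb <;> omega
      have hpN : (p : ℕ) < N := p.isLt
      have hmN : (m : ℕ) < N := m.isLt
      have hpm' : (p : ℕ) < (m : ℕ) := hpm
      have hx1 : i ≤ N - (p : ℕ) := by omega
      have hx2 : N - (p : ℕ) ≤ j - 1 := by omega
      have key := hB (N - (p : ℕ)) hx1 hx2 m.rev
        (by rw [Fin.val_rev]; omega)
      have hpr : (⟨N - (p : ℕ) - 1, by omega⟩ : Fin N) = p.rev := by
        apply Fin.ext
        rw [Fin.val_rev]
        show N - (p : ℕ) - 1 = N - ((p : ℕ) + 1)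
        omega
      rw [hpr] at key
      simpa using key
    · intro h2
      have hc : N + 1 - i ≤ (p : ℕ) ∧ (p : ℕ) ≤ N - 1 - d := by
        unfold cc at h2; split_ifs at h2 with ha hb <;> omega
      have hpN : (p : ℕ) < N := p.isLt
      obtain ⟨l, hld, hlt⟩ := hA p.rev (by rw [Fin.val_rev]; omega) (by rw [Fin.val_rev]; omega)
      refine ⟨l.rev, ?_, ?_⟩
      · have hlN : (l : ℕ) < N := l.isLt
        have : (p : ℕ) < (l.rev : ℕ) := by rw [Fin.val_rev]; omega
        exact this
      · simpa [Fin.rev_rev] using hlt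
  · intro hSat
    have hB : ∀ (x : ℕ) (_hx1 : i ≤ x) (_hx2 : x ≤ j - 1),
        ∀ m : Fin N, (m : ℕ) < x - 1 → σ ⟨x - 1, Nat.lt_of_lt_of_le (by omega) hjN⟩ < σ m := by
      intro x hx1 hx2 m hm
      have hmN : (m : ℕ) < N := m.isLt
      have hxN : x - 1 < N := by omega
      have hv : (((⟨x - 1, hxN⟩ : Fin N).rev) : ℕ) = N - x := by
        rw [Fin.val_rev]
        show N - (x - 1 + 1) = N - x
        omega
      have h1 := (hSat (⟨x - 1, hxN⟩ : Fin N).rev).1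
        (by unfold cc; rw [hv]; split_ifs with h h' <;> omega)
        m.rev
        (by
          show (((⟨x - 1, hxN⟩ : Fin N).rev) : ℕ) < ((m.rev) : ℕ)
          rw [hv, Fin.val_rev]
          omega)
      simpa [Fin.rev_rev] using h1
    refine ⟨A_equiv hd hdi (by omega) σ ?_, hB⟩
    intro m hm1 hm2
    have hmN : (m : ℕ) < N := m.isLt
    have h2 := (hSat m.rev).2
      (by
        unfold cc
        rw [if_neg, if_pos]
        · rw [Fin.val_rev]; constructor <;> omega
        · rw [Fin.val_rev]; omega)
    obtain ⟨m', hgt, hlt⟩ := h2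
    have hm'N : (m' : ℕ) < N := m'.isLt
    have hgt' : (m.rev : ℕ) < (m' : ℕ) := hgt
    rw [Fin.val_rev] at hgt'
    refine ⟨m'.rev, by rw [Fin.val_rev]; omega, ?_⟩
    simpa [Fin.rev_rev] using hlt

end Stmt4Aux

namespace Stmt4Aux

lemma fact_prod : ∀ (b a : ℕ), a ≤ b →
    Nat.factorial a * ∏ t ∈ Finset.Ico a b, (t + 1) = Nat.factorial b := by
  intro b
  induction b with
  | zero => intro a ha; interval_cases a; simp
  | succ b ih =>
    intro a ha
    rcases Nat.lt_or_ge a (b + 1) with h | h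
    · have hab : a ≤ b := by omega
      rw [Finset.prod_Ico_succ_top hab, ← mul_assoc, ih a hab, Nat.factorial_succ]
      ring
    · have : a = b + 1 := by omega
      subst this; simp

lemma fact_prod_id : ∀ (b a : ℕ), a ≤ b →
    Nat.factorial a * ∏ t ∈ Finset.Ico (a + 1) (b + 1), t = Nat.factorial b := by
  intro b
  induction b with
  | zero => intro a ha; interval_cases a; simp
  | succ b ih =>
    intro a ha
    rcases Nat.lt_or_ge a (b + 1) with h | h
    · have hab : a ≤ b := by omega
      rw [Finset.prod_Ico_succ_top (by omega : a + 1 ≤ b + 1), ← mul_assoc, ih a hab,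
        Nat.factorial_succ]
      ring
    · have : a = b + 1 := by omega
      subst this; simp

end Stmt4Aux

open scoped Classical in
set_option maxHeartbeats 2000000 in
/-- For a uniformly random permutation of `{1,...,N}` (0-indexed positions, smaller rank
better) and indices `d < i < j ≤ N`: the probability that the minimum over the first `i-1`
values is attained within the first `d`, and that for every `i ≤ x ≤ j-1` the applicant at
(1-based) index `x` is a left-to-right minimum (so `R(i) > R(i+1) > ⋯ > R(j-1)` forms a
strictly improving run), equals `d·(i-2)!/(j-1)!`. -/
theorem stmt4 (N d i j : ℕ) (hd : 1 ≤ d) (hdi : d < i) (hij : i < j) (hjN : j ≤ N) :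
    ((Finset.univ.filter (fun σ : Equiv.Perm (Fin N) =>
        (∀ m : Fin N, d ≤ (m : ℕ) → (m : ℕ) < i - 1 →
          ∃ l : Fin N, (l : ℕ) < d ∧ σ l < σ m) ∧
        (∀ (x : ℕ) (_hx1 : i ≤ x) (_hx2 : x ≤ j - 1),
          ∀ m : Fin N, (m : ℕ) < x - 1 → σ ⟨x - 1, by omega⟩ < σ m))).card : ℚ)
        / (Nat.factorial N)
      = (d : ℚ) * (Nat.factorial (i - 2) : ℚ) / (Nat.factorial (j - 1) : ℚ) := by
  classical
  have hρ2 : ∀ σ : Equiv.Perm (Fin N), σ * Fin.revPerm * Fin.revPerm = σ := by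
    intro σ; ext x
    simp [Equiv.Perm.mul_apply, Fin.rev_rev]
  have h1 : (Finset.univ.filter (fun σ : Equiv.Perm (Fin N) =>
        (∀ m : Fin N, d ≤ (m : ℕ) → (m : ℕ) < i - 1 →
          ∃ l : Fin N, (l : ℕ) < d ∧ σ l < σ m) ∧
        (∀ (x : ℕ) (_hx1 : i ≤ x) (_hx2 : x ≤ j - 1),
          ∀ m : Fin N, (m : ℕ) < x - 1 → σ ⟨x - 1, by omega⟩ < σ m))).card
      = (Finset.univ.filter (fun σ : Equiv.Perm (Fin N) =>
          Stmt4Aux.Sat (Stmt4Aux.cc N d i j) σ)).card := by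
    refine Finset.card_nbij' (fun σ => σ * Fin.revPerm) (fun σ => σ * Fin.revPerm) ?_ ?_ ?_ ?_
    · intro σ hσ
      rw [Finset.mem_coe, Finset.mem_filter] at hσ ⊢
      exact ⟨Finset.mem_univ _, (Stmt4Aux.orig_iff N d i j hd hdi hij hjN σ).mp hσ.2⟩
    · intro τ hτ
      rw [Finset.mem_coe, Finset.mem_filter] at hτ ⊢
      refine ⟨Finset.mem_univ _, ?_⟩
      have := (Stmt4Aux.orig_iff N d i j hd hdi hij hjN (τ * Fin.revPerm)).mpr
      rw [hρ2 τ] at this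
      exact this hτ.2
    · intro σ _; exact hρ2 σ
    · intro τ _; exact hρ2 τ
  have h3 : (∏ p ∈ Finset.range N, Stmt4Aux.w (Stmt4Aux.cc N d i j p) (N - p))
      = Nat.factorial d * (∏ t ∈ Finset.Ico d (i - 1), t)
          * (∏ t ∈ Finset.Ico (j - 1) N, (t + 1)) := by
    rw [← Finset.prod_range_reflect]
    have hterm : ∀ t ∈ Finset.range N,
        Stmt4Aux.w (Stmt4Aux.cc N d i j (N - 1 - t)) (N - (N - 1 - t))
          = (if i - 1 ≤ t ∧ t ≤ j - 2 then 1 else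
              if d ≤ t ∧ t ≤ i - 2 then t else t + 1) := by
      intro t ht
      rw [Finset.mem_range] at ht
      unfold Stmt4Aux.cc Stmt4Aux.w
      have hNt : N - (N - 1 - t) = t + 1 := by omega
      have c1 : (N + 1 - j ≤ N - 1 - t ∧ N - 1 - t ≤ N - i) ↔ (i - 1 ≤ t ∧ t ≤ j - 2) := by
        omega
      have c2 : (N + 1 - i ≤ N - 1 - t ∧ N - 1 - t ≤ N - 1 - d) ↔ (d ≤ t ∧ t ≤ i - 2) := by
        omega
      rw [hNt]
      simp only [c1, c2]
      clear c1 c2 hNt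
      split_ifs <;> first | omega | (exfalso; assumption)
    rw [Finset.prod_congr rfl hterm, Finset.range_eq_Ico,
      ← Finset.prod_Ico_consecutive _ (Nat.zero_le d) (by omega : d ≤ N),
      ← Finset.prod_Ico_consecutive _ (by omega : d ≤ i - 1) (by omega : i - 1 ≤ N),
      ← Finset.prod_Ico_consecutive _ (by omega : i - 1 ≤ j - 1) (by omega : j - 1 ≤ N)]
    have p1 : ∀ t ∈ Finset.Ico 0 d,
        (if i - 1 ≤ t ∧ t ≤ j - 2 then 1 else if d ≤ t ∧ t ≤ i - 2 then t else t + 1)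
          = t + 1 := by
      intro t ht; rw [Finset.mem_Ico] at ht; split_ifs <;> omega
    have p2 : ∀ t ∈ Finset.Ico d (i - 1),
        (if i - 1 ≤ t ∧ t ≤ j - 2 then 1 else if d ≤ t ∧ t ≤ i - 2 then t else t + 1)
          = t := by
      intro t ht; rw [Finset.mem_Ico] at ht; split_ifs <;> omega
    have p3 : ∀ t ∈ Finset.Ico (i - 1) (j - 1),
        (if i - 1 ≤ t ∧ t ≤ j - 2 then 1 else if d ≤ t ∧ t ≤ i - 2 then t else t + 1)
          = 1 := by
      intro t ht; rw [Finset.mem_Ico] at ht; split_ifs <;> omega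
    have p4 : ∀ t ∈ Finset.Ico (j - 1) N,
        (if i - 1 ≤ t ∧ t ≤ j - 2 then 1 else if d ≤ t ∧ t ≤ i - 2 then t else t + 1)
          = t + 1 := by
      intro t ht; rw [Finset.mem_Ico] at ht; split_ifs <;> omega
    rw [Finset.prod_congr rfl p1, Finset.prod_congr rfl p2, Finset.prod_congr rfl p3,
      Finset.prod_congr rfl p4, Finset.prod_const_one, ← Finset.range_eq_Ico,
      Finset.prod_range_add_one_eq_factorial]
    ring
  have hcard : (Finset.univ.filter (fun σ : Equiv.Perm (Fin N) =>
        (∀ m : Fin N, d ≤ (m : ℕ) → (m : ℕ) < i - 1 →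
          ∃ l : Fin N, (l : ℕ) < d ∧ σ l < σ m) ∧
        (∀ (x : ℕ) (_hx1 : i ≤ x) (_hx2 : x ≤ j - 1),
          ∀ m : Fin N, (m : ℕ) < x - 1 → σ ⟨x - 1, by omega⟩ < σ m))).card
      = Nat.factorial d * (∏ t ∈ Finset.Ico d (i - 1), t)
          * (∏ t ∈ Finset.Ico (j - 1) N, (t + 1)) := by
    rw [h1, Stmt4Aux.count N (Stmt4Aux.cc N d i j), h3]
  set P1 := ∏ t ∈ Finset.Ico d (i - 1), t with hP1
  set P2 := ∏ t ∈ Finset.Ico (j - 1) N, (t + 1) with hP2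
  have e1 : Nat.factorial (d - 1) * P1 = Nat.factorial (i - 2) := by
    have := Stmt4Aux.fact_prod_id (i - 2) (d - 1) (by omega)
    rw [show d - 1 + 1 = d by omega, show i - 2 + 1 = i - 1 by omega] at this
    rw [hP1]; exact this
  have e2 : Nat.factorial (j - 1) * P2 = Nat.factorial N := by
    have := Stmt4Aux.fact_prod N (j - 1) (by omega)
    rw [hP2]; exact this
  have keyN : Nat.factorial d * P1 * P2 * Nat.factorial (j - 1)
      = d * Nat.factorial (i - 2) * Nat.factorial N := by
    have hd' : Nat.factorial d = d * Nat.factorial (d - 1) := by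
      cases d with
      | zero => omega
      | succ k => simp [Nat.factorial_succ]
    have hc : (Nat.factorial d * P1 * P2 * Nat.factorial (j - 1)) * Nat.factorial (d - 1)
        = (d * Nat.factorial (i - 2) * Nat.factorial N) * Nat.factorial (d - 1) := by
      rw [hd', ← e1, ← e2]
      ring
    exact Nat.eq_of_mul_eq_mul_right (Nat.factorial_pos _) hc
  rw [hcard, div_eq_div_iff (by exact_mod_cast Nat.factorial_ne_zero N)
    (by exact_mod_cast Nat.factorial_ne_zero (j - 1))]
  push_cast
  exact_mod_cast keyN
end

section
/- In the Best-1 sliding-window secretary problem with N applicants, window size K = 2, and threshold d ≥ 1, the probability of winning equals 2/N + (d/N) · Σ_{j=d+3}^{N} [ Σ_{i=d+1}^{j} (i-2)! ] / (j-1)!. -/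
/-- In the Best-1 sliding-window problem with window size `K = 2` (0-indexed positions,
smaller rank better), position `m` holds a *candidate* if its rank beats every
other applicant seen by the time the window front reaches `m`, i.e. every other
position `t < m + 2`. -/
def IsCandidateK2 (N : ℕ) (σ : Equiv.Perm (Fin N)) (m : Fin N) : Prop :=
  ∀ t : Fin N, (t : ℕ) < (m : ℕ) + 2 → t ≠ m → σ m < σ t

/-- The interviewer rejects the first `d` applicants (0-indexed positions `< d`) and, by
the sliding rule, selects the first candidate at a position `≥ d`; she wins iff that
first candidate is the overall best applicant (rank `0`). -/
def WinK2 (N d : ℕ) (σ : Equiv.Perm (Fin N)) : Prop :=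
  ∃ m : Fin N, d ≤ (m : ℕ) ∧ IsCandidateK2 N σ m ∧ (σ m : ℕ) = 0 ∧
    ∀ m' : Fin N, d ≤ (m' : ℕ) → (m' : ℕ) < (m : ℕ) → ¬ IsCandidateK2 N σ m'

namespace SecAux
open Finset
open scoped Classical

def NC (N d : ℕ) (σ : Equiv.Perm (Fin N)) (b : ℕ) : Prop :=
  ∀ m : Fin N, d ≤ (m:ℕ) → (m:ℕ) + 2 ≤ b → ¬ IsCandidateK2 N σ m

def MinAt {N : ℕ} (σ : Equiv.Perm (Fin N)) (b : ℕ) (p : Fin N) : Prop :=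
  (p:ℕ) < b ∧ ∀ t : Fin N, (t:ℕ) < b → t ≠ p → σ p < σ t

variable {N d : ℕ}

lemma win_iff [NeZero N] (σ : Equiv.Perm (Fin N)) :
    WinK2 N d σ ↔ d ≤ ((σ.symm 0 : Fin N) : ℕ) ∧ NC N d σ (σ.symm 0) := by
  constructor
  · rintro ⟨m, hdm, hcand, hm0, hfirst⟩
    have hm : m = σ.symm 0 := by
      have : σ m = 0 := Fin.ext hm0
      simpa using congrArg σ.symm this
    subst hm
    refine ⟨hdm, fun m' hdm' hm'2 hc => hfirst m' hdm' (by omega) hc⟩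
  · rintro ⟨hdb, hnc⟩
    refine ⟨σ.symm 0, hdb, ?_, by simp, ?_⟩
    · intro t _ ht
      have h0 : σ (σ.symm 0) = 0 := by simp
      have : σ t ≠ 0 := fun h => ht (by simpa using congrArg σ.symm h)
      rw [h0]
      exact (Fin.pos_iff_ne_zero' _).mpr this
    · intro m' hdm' hlt hc
      by_cases h2 : (m' : ℕ) + 2 ≤ ((σ.symm 0 : Fin N) : ℕ)
      · exact hnc m' hdm' h2 hc
      · have hb : ((σ.symm 0 : Fin N) : ℕ) = (m' : ℕ) + 1 := by omega
        have := hc (σ.symm 0) (by omega) (by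
          intro h; rw [h] at hb; omega)
        rw [show σ (σ.symm 0) = 0 by simp] at this
        exact absurd this (by simp [Fin.lt_iff_val_lt_val])

lemma card_fiber_eq [NeZero N] (b b' : Fin N) :
    (univ.filter fun σ : Equiv.Perm (Fin N) => σ.symm 0 = b).card
      = (univ.filter fun σ : Equiv.Perm (Fin N) => σ.symm 0 = b').card := by
  apply card_nbij' (fun σ => (Equiv.swap b b').trans σ) (fun σ => (Equiv.swap b b').trans σ)
  · intro σ hσ
    simp only [mem_coe, mem_filter, mem_univ, true_and] at hσ ⊢
    rw [Equiv.symm_trans_apply, hσ, Equiv.symm_swap, Equiv.swap_apply_left]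
  · intro σ hσ
    simp only [mem_coe, mem_filter, mem_univ, true_and] at hσ ⊢
    rw [Equiv.symm_trans_apply, hσ, Equiv.symm_swap, Equiv.swap_apply_right]
  · intro σ _; ext x; simp
  · intro σ _; ext x; simp

lemma card_fiber [NeZero N] (b : Fin N) :
    N * (univ.filter fun σ : Equiv.Perm (Fin N) => σ.symm 0 = b).card
      = Nat.factorial N := by
  have h : (univ : Finset (Equiv.Perm (Fin N))).card
      = ∑ b' : Fin N, (univ.filter fun σ : Equiv.Perm (Fin N) => σ.symm 0 = b').card :=
    card_eq_sum_card_fiberwise (fun σ _ => mem_univ (σ.symm 0))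
  have h2 : ∀ b' : Fin N, (univ.filter fun σ : Equiv.Perm (Fin N) => σ.symm 0 = b').card
      = (univ.filter fun σ : Equiv.Perm (Fin N) => σ.symm 0 = b).card :=
    fun b' => card_fiber_eq b' b
  rw [Finset.sum_congr rfl (fun b' _ => h2 b'), Finset.sum_const, smul_eq_mul] at h
  simp only [card_univ, Fintype.card_fin] at h
  rw [← h, Fintype.card_perm, Fintype.card_fin]

lemma existsUnique_minAt (σ : Equiv.Perm (Fin N)) {b : ℕ} (hb1 : 1 ≤ b) (hbN : b ≤ N) :
    ∃! p : Fin N, MinAt σ b p := by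
  have h0N : 0 < N := lt_of_lt_of_le hb1 hbN
  have hne : (univ.filter fun t : Fin N => (t:ℕ) < b).Nonempty :=
    ⟨⟨0, h0N⟩, by simp; omega⟩
  obtain ⟨p, hp, hmin⟩ := Finset.exists_min_image _ σ hne
  simp only [mem_filter, mem_univ, true_and] at hp
  refine ⟨p, ⟨hp, fun t ht htp => ?_⟩, ?_⟩
  · have := hmin t (by simp [ht])
    exact lt_of_le_of_ne this (fun h => htp (σ.injective h).symm)
  · rintro q ⟨hq, hqmin⟩
    by_contra hqp
    have h1 := hqmin p hp (fun h => hqp (by rw [h]))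
    have := hmin q (by simp [hq])
    exact absurd h1 (not_lt.mpr this)

lemma nc_of_min_lt_d (σ : Equiv.Perm (Fin N)) {b : ℕ} {p : Fin N}
    (hp : MinAt σ b p) (hpd : (p:ℕ) < d) : NC N d σ b := by
  intro m hdm hm2 hc
  have hpm : p ≠ m := fun h => absurd (congrArg Fin.val h) (by omega)
  have h1 : σ m < σ p := hc p (by omega) hpm
  have h2 : σ p < σ m := hp.2 m (by omega) (fun h => hpm h.symm)
  exact absurd h1 (not_lt.mpr h2.le)

lemma not_nc_of_min_mid (σ : Equiv.Perm (Fin N)) {b : ℕ} {p : Fin N}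
    (hp : MinAt σ b p) (hpd : d ≤ (p:ℕ)) (hpb : (p:ℕ) + 2 ≤ b) : ¬ NC N d σ b := by
  intro hnc
  exact hnc p hpd hpb (fun t ht htp => hp.2 t (by omega) htp)

lemma nc_mono (σ : Equiv.Perm (Fin N)) {b b' : ℕ} (h : b' ≤ b) (hnc : NC N d σ b) :
    NC N d σ b' := fun m hdm hm2 => hnc m hdm (by omega)

lemma nc_succ_iff (σ : Equiv.Perm (Fin N)) {b : ℕ} {p : Fin N}
    (hp : MinAt σ b p) (hpb : (p:ℕ) + 1 = b) :
    NC N d σ b ↔ NC N d σ (b - 1) := by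
  constructor
  · exact fun h => nc_mono σ (by omega) h
  · intro h m hdm hm2 hc
    rcases Nat.lt_or_ge ((m:ℕ) + 2) b with h' | h'
    · exact h m hdm (by omega) hc
    · have hmp : (m:ℕ) + 1 = (p:ℕ) := by omega
      have hne : p ≠ m := fun hh => absurd (congrArg Fin.val hh) (by omega)
      have h1 : σ m < σ p := hc p (by omega) hne
      have h2 : σ p < σ m := hp.2 m (by omega) (fun hh => hne hh.symm)
      exact absurd h1 (not_lt.mpr h2.le)

noncomputable def minPos [NeZero N] (σ : Equiv.Perm (Fin N)) (b : ℕ) : Fin N :=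
  if h : 1 ≤ b ∧ b ≤ N then Fintype.choose _ (existsUnique_minAt σ h.1 h.2) else 0

lemma minPos_spec [NeZero N] (σ : Equiv.Perm (Fin N)) {b : ℕ} (hb1 : 1 ≤ b) (hbN : b ≤ N) :
    MinAt σ b (minPos σ b) := by
  rw [minPos, dif_pos ⟨hb1, hbN⟩]
  exact Fintype.choose_spec _ _

lemma minAt_iff [NeZero N] (σ : Equiv.Perm (Fin N)) {b : ℕ} (hb1 : 1 ≤ b) (hbN : b ≤ N)
    (p : Fin N) : MinAt σ b p ↔ minPos σ b = p := by
  constructor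
  · intro h
    exact ((existsUnique_minAt σ hb1 hbN).unique (minPos_spec σ hb1 hbN) h)
  · rintro rfl; exact minPos_spec σ hb1 hbN

def T (N b : ℕ) : Finset (Fin N) := univ.filter fun p : Fin N => (p:ℕ) < b

lemma card_T {b : ℕ} (hbN : b ≤ N) : (T N b).card = b := by
  have key : (T N b).card = (Finset.range b).card := by
    refine Finset.card_bij (fun (p : Fin N) (_ : p ∈ T N b) => (p:ℕ)) ?_ ?_ ?_ <;>
      simp only [T, mem_filter, mem_univ, true_and]
    · intro a ha; simpa using ha
    · intro a ha a' ha' h; exact Fin.ext h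
    · intro x hx
      simp only [mem_range] at hx
      exact ⟨⟨x, lt_of_lt_of_le hx hbN⟩, by simpa using hx, rfl⟩
  rw [key, Finset.card_range]

lemma split_card [NeZero N] (P : Equiv.Perm (Fin N) → Prop) {b : ℕ} (hb1 : 1 ≤ b)
    (hbN : b ≤ N) :
    (univ.filter fun σ => P σ).card
      = ∑ p ∈ T N b, (univ.filter fun σ => P σ ∧ MinAt σ b p).card := by
  rw [Finset.card_eq_sum_card_fiberwise
    (f := fun σ => minPos σ b) (t := T N b)
    (fun σ _ => by simp [T, (minPos_spec σ hb1 hbN).1])]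
  refine Finset.sum_congr rfl fun p _ => ?_
  congr 1
  ext σ
  simp only [mem_filter, mem_univ, true_and, filter_filter]
  exact and_congr_right fun _ => (minAt_iff σ hb1 hbN p).symm

lemma swap_cases (a c w : Fin N) :
    (w = a ∧ Equiv.swap a c w = c) ∨ (w = c ∧ Equiv.swap a c w = a)
      ∨ (w ≠ a ∧ w ≠ c ∧ Equiv.swap a c w = w) := by
  rcases eq_or_ne w a with rfl | hwa
  · exact Or.inl ⟨rfl, Equiv.swap_apply_left _ _⟩
  rcases eq_or_ne w c with rfl | hwc
  · exact Or.inr (Or.inl ⟨rfl, Equiv.swap_apply_right _ _⟩)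
  · exact Or.inr (Or.inr ⟨hwa, hwc, Equiv.swap_apply_of_ne_of_ne hwa hwc⟩)

lemma swap_lt_iff {a c u v : Fin N} (hac : a < c)
    (hu : ¬(a < u ∧ u < c)) (hv : ¬(a < v ∧ v < c))
    (h : (u ≠ a ∧ v ≠ a) ∨ (u ≠ c ∧ v ≠ c)) :
    (Equiv.swap a c u < Equiv.swap a c v ↔ u < v) := by
  rcases swap_cases a c u with ⟨hu1, hu2⟩ | ⟨hu1, hu2⟩ | ⟨hu1, hu1', hu2⟩ <;>
    rcases swap_cases a c v with ⟨hv1, hv2⟩ | ⟨hv1, hv2⟩ | ⟨hv1, hv1', hv2⟩ <;>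
    rw [hu2, hv2] <;>
    simp only [Fin.lt_def, Fin.ext_iff, ne_eq, not_and] at * <;>
    omega

lemma nc_of_rel {σ σ' : Equiv.Perm (Fin N)} {c : ℕ}
    (h : ∀ x y : Fin N, (x:ℕ) < c → (y:ℕ) < c → (σ x < σ y ↔ σ' x < σ' y))
    (hnc : NC N d σ c) : NC N d σ' c := by
  intro m hdm hm2 hc'
  exact hnc m hdm hm2 (fun t ht htm => (h m t (by omega) (by omega)).mpr (hc' t ht htm))

def KS (bm b : Fin N) (σ : Equiv.Perm (Fin N)) : Finset (Fin N) :=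
  univ.filter fun t : Fin N => (t:ℕ) < (bm:ℕ) ∧ σ t < σ b

def Kc (bm b : Fin N) (σ : Equiv.Perm (Fin N)) : ℕ := (KS bm b σ).card

def AS (bm b : Fin N) (σ : Equiv.Perm (Fin N)) : Finset (Fin N) :=
  univ.filter fun t : Fin N => (t:ℕ) < (bm:ℕ) ∧ σ b < σ t

noncomputable def fwd (bm b : Fin N) (σ : Equiv.Perm (Fin N)) : Equiv.Perm (Fin N) :=
  if h : ((AS bm b σ).image σ).Nonempty
  then σ.trans (Equiv.swap (σ b) (((AS bm b σ).image σ).min' h)) else σ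

noncomputable def bwd (bm b : Fin N) (τ : Equiv.Perm (Fin N)) : Equiv.Perm (Fin N) :=
  if h : ((KS bm b τ).image τ).Nonempty
  then τ.trans (Equiv.swap (((KS bm b τ).image τ).max' h) (τ b)) else τ

lemma fwd_spec [NeZero N] {bm b : Fin N} (hb : (bm:ℕ) + 1 = (b:ℕ))
    {σ : Equiv.Perm (Fin N)} (hσ0 : σ.symm 0 = bm) {i : ℕ}
    (hK : Kc bm b σ = i) (hi : i + 1 ≤ (bm:ℕ)) (hnc : NC N d σ (bm:ℕ)) :
    (fwd bm b σ).symm 0 = bm ∧ NC N d (fwd bm b σ) (bm:ℕ) ∧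
      Kc bm b (fwd bm b σ) = i + 1 ∧ bwd bm b (fwd bm b σ) = σ := by
  have hσbm : σ bm = 0 := by rw [← hσ0]; simp
  have hbmb : bm ≠ b := fun h => by
    have := congrArg Fin.val h; omega
  have hne_b : ∀ t : Fin N, (t:ℕ) < (bm:ℕ) → t ≠ b :=
    fun t ht h => by have := congrArg Fin.val h; omega
  have hne_bm : ∀ t : Fin N, (t:ℕ) < (bm:ℕ) → t ≠ bm :=
    fun t ht h => by have := congrArg Fin.val h; omega
  have hσtb : ∀ t : Fin N, (t:ℕ) < (bm:ℕ) → σ t ≠ σ b :=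
    fun t ht h => hne_b t ht (σ.injective h)
  -- nonemptiness of AS
  have hASne : (AS bm b σ).Nonempty := by
    by_contra hne
    rw [Finset.not_nonempty_iff_eq_empty] at hne
    have hall : KS bm b σ = univ.filter fun t : Fin N => (t:ℕ) < (bm:ℕ) := by
      ext t
      simp only [KS, mem_filter, mem_univ, true_and, and_iff_left_iff_imp]
      intro ht
      rcases lt_or_gt_of_ne (hσtb t ht) with h | h
      · exact h
      · refine absurd (?_ : t ∈ AS bm b σ) (by simp [hne])
        simp only [AS, mem_filter, mem_univ, true_and]
        exact ⟨ht, h⟩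
    have hcard : Kc bm b σ = (bm:ℕ) := by
      rw [Kc, hall]
      have : (univ.filter fun t : Fin N => (t:ℕ) < (bm:ℕ)).card
          = (Finset.range (bm:ℕ)).card := by
        refine Finset.card_bij (fun (p : Fin N) _ => (p:ℕ)) ?_ ?_ ?_ <;>
          simp only [mem_filter, mem_univ, true_and]
        · intro p hp; simpa using hp
        · intro p _ p' _ h; exact Fin.ext h
        · intro x hx
          simp only [mem_range] at hx
          exact ⟨⟨x, lt_trans hx bm.isLt⟩, by simpa using hx, rfl⟩
      rw [this, Finset.card_range]
    omega
  have hAimg : ((AS bm b σ).image σ).Nonempty := hASne.image σ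
  obtain ⟨q, hqmem, hqc⟩ := Finset.mem_image.mp (Finset.min'_mem _ hAimg)
  simp only [AS, mem_filter, mem_univ, true_and] at hqmem
  have hqlt : (q:ℕ) < (bm:ℕ) := hqmem.1
  have hac : σ b < σ q := hqmem.2
  have hmin : ∀ t : Fin N, (t:ℕ) < (bm:ℕ) → σ b < σ t → σ q ≤ σ t := by
    intro t ht h'
    rw [hqc]
    refine Finset.min'_le _ _ (Finset.mem_image_of_mem σ ?_)
    simp only [AS, mem_filter, mem_univ, true_and]
    exact ⟨ht, h'⟩
  have gap : ∀ t : Fin N, (t:ℕ) < (bm:ℕ) → ¬(σ b < σ t ∧ σ t < σ q) :=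
    fun t ht ⟨h1, h2⟩ => absurd (hmin t ht h1) (not_le.mpr h2)
  have hfwd : fwd bm b σ = σ.trans (Equiv.swap (σ b) (σ q)) := by
    rw [fwd, dif_pos hAimg, ← hqc]
  have hσ'app : ∀ t, (σ.trans (Equiv.swap (σ b) (σ q))) t
      = Equiv.swap (σ b) (σ q) (σ t) := fun t => rfl
  set σ' := σ.trans (Equiv.swap (σ b) (σ q)) with hσ'
  have hσ'b : σ' b = σ q := by rw [hσ'app, Equiv.swap_apply_left]
  have hσ'q : σ' q = σ b := by rw [hσ'app, Equiv.swap_apply_right]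
  have hσ'eq : ∀ t : Fin N, (t:ℕ) < (bm:ℕ) → σ t ≠ σ q → σ' t = σ t := by
    intro t ht htc
    rw [hσ'app, Equiv.swap_apply_of_ne_of_ne (hσtb t ht) htc]
  have ha0 : σ b ≠ 0 := by
    rw [← hσbm]; exact fun h => hbmb (σ.injective h).symm
  have hc0 : σ q ≠ 0 := by
    rw [← hσbm]
    exact fun h => (hne_bm q hqlt) (σ.injective h)
  have hsymm : σ'.symm 0 = bm := by
    rw [hσ', Equiv.symm_trans_apply, Equiv.symm_swap,
      Equiv.swap_apply_of_ne_of_ne (Ne.symm ha0) (Ne.symm hc0), hσ0]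
  have hrel : ∀ x y : Fin N, (x:ℕ) < (bm:ℕ) → (y:ℕ) < (bm:ℕ) →
      (σ x < σ y ↔ σ' x < σ' y) := by
    intro x y hx hy
    rw [hσ'app, hσ'app]
    exact (swap_lt_iff hac (gap x hx) (gap y hy)
      (Or.inl ⟨hσtb x hx, hσtb y hy⟩)).symm
  have hKS : KS bm b σ' = insert q (KS bm b σ) := by
    ext t
    simp only [KS, mem_filter, mem_univ, true_and, mem_insert, hσ'b]
    constructor
    · rintro ⟨ht, hlt⟩
      rcases eq_or_ne t q with rfl | htq
      · exact Or.inl rfl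
      right
      have htc : σ t ≠ σ q := fun h => htq (σ.injective h)
      rw [hσ'eq t ht htc] at hlt
      refine ⟨ht, ?_⟩
      rcases lt_or_gt_of_ne (hσtb t ht) with h | h
      · exact h
      · exact absurd ⟨h, lt_of_le_of_ne hlt.le htc⟩ (gap t ht)
    · rintro (rfl | ⟨ht, hlt⟩)
      · exact ⟨hqlt, by rw [hσ'q]; exact hac⟩
      · have htc : σ t ≠ σ q := fun h => absurd (h ▸ hlt) (not_lt.mpr hac.le)
        exact ⟨ht, by rw [hσ'eq t ht htc]; exact lt_trans hlt hac⟩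
  have hqnot : q ∉ KS bm b σ := by
    simp only [KS, mem_filter, mem_univ, true_and, not_and]
    intro _
    exact not_lt.mpr hac.le
  have hKc' : Kc bm b σ' = i + 1 := by
    rw [Kc, hKS, Finset.card_insert_of_notMem hqnot, ← Kc, hK]
  have himg : (KS bm b σ').image σ' = insert (σ b) ((KS bm b σ).image σ) := by
    rw [hKS, Finset.image_insert, hσ'q]
    congr 1
    apply Finset.image_congr
    intro t htmem
    simp only [KS, mem_coe, mem_filter, mem_univ, true_and] at htmem
    exact hσ'eq t htmem.1 (fun h => absurd (h ▸ htmem.2) (not_lt.mpr hac.le))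
  have hbwd : bwd bm b σ' = σ := by
    have hKSne : ((KS bm b σ').image σ').Nonempty := by
      rw [himg]; exact Finset.insert_nonempty _ _
    have hmax : ((KS bm b σ').image σ').max' hKSne = σ b := by
      apply le_antisymm
      · apply Finset.max'_le
        intro u hu
        rw [himg, Finset.mem_insert] at hu
        rcases hu with rfl | hu
        · exact le_refl _
        · obtain ⟨t, htmem, rfl⟩ := Finset.mem_image.mp hu
          simp only [KS, mem_filter, mem_univ, true_and] at htmem
          exact htmem.2.le
      · exact Finset.le_max' _ _ (by rw [himg]; exact Finset.mem_insert_self _ _)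
    rw [bwd, dif_pos hKSne, hmax, hσ'b]
    ext x
    simp [hσ', Equiv.trans_apply, Equiv.swap_apply_self]
  rw [hfwd]
  exact ⟨hsymm, nc_of_rel hrel hnc, hKc', hbwd⟩


lemma bwd_spec [NeZero N] {bm b : Fin N} (hb : (bm:ℕ) + 1 = (b:ℕ))
    {τ : Equiv.Perm (Fin N)} (hτ0 : τ.symm 0 = bm) {i : ℕ}
    (hK : Kc bm b τ = i + 1) (hnc : NC N d τ (bm:ℕ)) :
    (bwd bm b τ).symm 0 = bm ∧ NC N d (bwd bm b τ) (bm:ℕ) ∧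
      Kc bm b (bwd bm b τ) = i ∧ fwd bm b (bwd bm b τ) = τ := by
  have hτbm : τ bm = 0 := by rw [← hτ0]; simp
  have hbmb : bm ≠ b := fun h => by
    have := congrArg Fin.val h; omega
  have hne_b : ∀ t : Fin N, (t:ℕ) < (bm:ℕ) → t ≠ b :=
    fun t ht h => by have := congrArg Fin.val h; omega
  have hne_bm : ∀ t : Fin N, (t:ℕ) < (bm:ℕ) → t ≠ bm :=
    fun t ht h => by have := congrArg Fin.val h; omega
  have hτtb : ∀ t : Fin N, (t:ℕ) < (bm:ℕ) → τ t ≠ τ b :=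
    fun t ht h => hne_b t ht (τ.injective h)
  have hKSne : (KS bm b τ).Nonempty := by
    rw [← Finset.card_pos, ← Kc, hK]; omega
  have hKimg : ((KS bm b τ).image τ).Nonempty := hKSne.image τ
  obtain ⟨q, hqmem, hqa⟩ := Finset.mem_image.mp (Finset.max'_mem _ hKimg)
  simp only [KS, mem_filter, mem_univ, true_and] at hqmem
  have hqlt : (q:ℕ) < (bm:ℕ) := hqmem.1
  have hca : τ q < τ b := hqmem.2
  have hmax : ∀ t : Fin N, (t:ℕ) < (bm:ℕ) → τ t < τ b → τ t ≤ τ q := by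
    intro t ht h'
    rw [hqa]
    refine Finset.le_max' _ _ (Finset.mem_image_of_mem τ ?_)
    simp only [KS, mem_filter, mem_univ, true_and]
    exact ⟨ht, h'⟩
  have gap : ∀ t : Fin N, (t:ℕ) < (bm:ℕ) → ¬(τ q < τ t ∧ τ t < τ b) :=
    fun t ht ⟨h1, h2⟩ => absurd (hmax t ht h2) (not_le.mpr h1)
  have hbwd : bwd bm b τ = τ.trans (Equiv.swap (τ q) (τ b)) := by
    rw [bwd, dif_pos hKimg, ← hqa]
  have hτ'app : ∀ t, (τ.trans (Equiv.swap (τ q) (τ b))) t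
      = Equiv.swap (τ q) (τ b) (τ t) := fun t => rfl
  set τ' := τ.trans (Equiv.swap (τ q) (τ b)) with hτ'
  have hτ'b : τ' b = τ q := by rw [hτ'app, Equiv.swap_apply_right]
  have hτ'q : τ' q = τ b := by rw [hτ'app, Equiv.swap_apply_left]
  have hτ'eq : ∀ t : Fin N, (t:ℕ) < (bm:ℕ) → τ t ≠ τ q → τ' t = τ t := by
    intro t ht htc
    rw [hτ'app, Equiv.swap_apply_of_ne_of_ne htc (hτtb t ht)]
  have ha0 : τ q ≠ 0 := by
    rw [← hτbm]
    exact fun h => (hne_bm q hqlt) (τ.injective h)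
  have hc0 : τ b ≠ 0 := by
    rw [← hτbm]; exact fun h => hbmb (τ.injective h).symm
  have hsymm : τ'.symm 0 = bm := by
    rw [hτ', Equiv.symm_trans_apply, Equiv.symm_swap,
      Equiv.swap_apply_of_ne_of_ne (Ne.symm ha0) (Ne.symm hc0), hτ0]
  have hrel : ∀ x y : Fin N, (x:ℕ) < (bm:ℕ) → (y:ℕ) < (bm:ℕ) →
      (τ x < τ y ↔ τ' x < τ' y) := by
    intro x y hx hy
    rw [hτ'app, hτ'app]
    exact (swap_lt_iff hca (gap x hx) (gap y hy)
      (Or.inr ⟨hτtb x hx, hτtb y hy⟩)).symm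
  have hqKS : q ∈ KS bm b τ := by
    simp only [KS, mem_filter, mem_univ, true_and]
    exact ⟨hqlt, hca⟩
  have hKS' : KS bm b τ' = (KS bm b τ).erase q := by
    ext t
    simp only [KS, mem_filter, mem_univ, true_and, Finset.mem_erase, hτ'b]
    constructor
    · rintro ⟨ht, hlt⟩
      have htq : t ≠ q := by
        rintro rfl
        rw [hτ'q] at hlt
        exact absurd hlt (not_lt.mpr hca.le)
      have htc : τ t ≠ τ q := fun h => htq (τ.injective h)
      rw [hτ'eq t ht htc] at hlt
      exact ⟨htq, ht, lt_trans hlt hca⟩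
    · rintro ⟨htq, ht, hlt⟩
      have htc : τ t ≠ τ q := fun h => htq (τ.injective h)
      refine ⟨ht, ?_⟩
      rw [hτ'eq t ht htc]
      rcases lt_or_gt_of_ne htc with h | h
      · exact h
      · exact absurd ⟨h, hlt⟩ (gap t ht)
  have hKc' : Kc bm b τ' = i := by
    rw [Kc, hKS', Finset.card_erase_of_mem hqKS, ← Kc, hK]
    omega
  have hAS' : AS bm b τ' = insert q (AS bm b τ) := by
    ext t
    simp only [AS, mem_filter, mem_univ, true_and, mem_insert, hτ'b]
    constructor
    · rintro ⟨ht, hlt⟩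
      rcases eq_or_ne t q with rfl | htq
      · exact Or.inl rfl
      right
      have htc : τ t ≠ τ q := fun h => htq (τ.injective h)
      rw [hτ'eq t ht htc] at hlt
      refine ⟨ht, ?_⟩
      rcases lt_or_gt_of_ne (hτtb t ht) with h | h
      · exact absurd ⟨hlt, h⟩ (gap t ht)
      · exact h
    · rintro (rfl | ⟨ht, hlt⟩)
      · exact ⟨hqlt, by rw [hτ'q]; exact hca⟩
      · have htc : τ t ≠ τ q := fun h => absurd (h ▸ hlt) (not_lt.mpr hca.le)
        exact ⟨ht, by rw [hτ'eq t ht htc]; exact lt_trans hca hlt⟩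
  have himg : (AS bm b τ').image τ' = insert (τ b) ((AS bm b τ).image τ) := by
    rw [hAS', Finset.image_insert, hτ'q]
    congr 1
    apply Finset.image_congr
    intro t htmem
    simp only [AS, mem_coe, mem_filter, mem_univ, true_and] at htmem
    exact hτ'eq t htmem.1 (fun h => absurd (h ▸ htmem.2) (not_lt.mpr hca.le))
  have hfwd : fwd bm b τ' = τ := by
    have hASne' : ((AS bm b τ').image τ').Nonempty := by
      rw [himg]; exact Finset.insert_nonempty _ _
    have hmin : ((AS bm b τ').image τ').min' hASne' = τ b := by
      apply le_antisymm
      · exact Finset.min'_le _ _ (by rw [himg]; exact Finset.mem_insert_self _ _)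
      · apply Finset.le_min'
        intro u hu
        rw [himg, Finset.mem_insert] at hu
        rcases hu with rfl | hu
        · exact le_refl _
        · obtain ⟨t, htmem, rfl⟩ := Finset.mem_image.mp hu
          simp only [AS, mem_filter, mem_univ, true_and] at htmem
          exact htmem.2.le
    rw [fwd, dif_pos hASne', hmin, hτ'b]
    ext x
    simp [hτ', Equiv.trans_apply, Equiv.swap_apply_self]
  rw [hbwd]
  exact ⟨hsymm, nc_of_rel hrel hnc, hKc', hfwd⟩


lemma card_shift [NeZero N] {bm b : Fin N} (hb : (bm:ℕ) + 1 = (b:ℕ)) {i : ℕ}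
    (hi : i + 1 ≤ (bm:ℕ)) :
    (univ.filter fun σ : Equiv.Perm (Fin N) =>
        σ.symm 0 = bm ∧ NC N d σ (bm:ℕ) ∧ Kc bm b σ = i).card
      = (univ.filter fun σ : Equiv.Perm (Fin N) =>
        σ.symm 0 = bm ∧ NC N d σ (bm:ℕ) ∧ Kc bm b σ = i + 1).card := by
  apply card_nbij' (fwd bm b) (bwd bm b)
  · intro σ hσ
    simp only [mem_coe, mem_filter, mem_univ, true_and] at hσ ⊢
    obtain ⟨h0, hnc, hK⟩ := hσ
    obtain ⟨h1, h2, h3, _⟩ := fwd_spec hb h0 hK hi hnc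
    exact ⟨h1, h2, h3⟩
  · intro τ hτ
    simp only [mem_coe, mem_filter, mem_univ, true_and] at hτ ⊢
    obtain ⟨h0, hnc, hK⟩ := hτ
    obtain ⟨h1, h2, h3, _⟩ := bwd_spec hb h0 hK hnc
    exact ⟨h1, h2, h3⟩
  · intro σ hσ
    simp only [mem_coe, mem_filter, mem_univ, true_and] at hσ
    exact (fwd_spec hb hσ.1 hσ.2.2 hi hσ.2.1).2.2.2
  · intro τ hτ
    simp only [mem_coe, mem_filter, mem_univ, true_and] at hτ
    exact (bwd_spec hb hτ.1 hτ.2.2 hτ.2.1).2.2.2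

lemma equal_K [NeZero N] {bm b : Fin N} (hb : (bm:ℕ) + 1 = (b:ℕ)) {i : ℕ}
    (hi : i ≤ (bm:ℕ)) :
    (univ.filter fun σ : Equiv.Perm (Fin N) =>
        σ.symm 0 = bm ∧ NC N d σ (bm:ℕ) ∧ Kc bm b σ = i).card
      = (univ.filter fun σ : Equiv.Perm (Fin N) =>
        σ.symm 0 = bm ∧ NC N d σ (bm:ℕ) ∧ Kc bm b σ = 0).card := by
  induction i with
  | zero => rfl
  | succ n ih =>
    rw [← card_shift hb hi, ih (by omega)]

lemma kc_le [NeZero N] (bm b : Fin N) (σ : Equiv.Perm (Fin N)) : Kc bm b σ ≤ (bm:ℕ) := by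
  have h1 : KS bm b σ ⊆ T N (bm:ℕ) := fun t ht => by
    simp only [KS, mem_filter, mem_univ, true_and] at ht
    simp only [T, mem_filter, mem_univ, true_and]
    exact ht.1
  calc Kc bm b σ ≤ (T N (bm:ℕ)).card := Finset.card_le_card h1
    _ = (bm:ℕ) := card_T bm.isLt.le

lemma sum_K [NeZero N] {bm b : Fin N} (hb : (bm:ℕ) + 1 = (b:ℕ)) :
    ((bm:ℕ) + 1) * (univ.filter fun σ : Equiv.Perm (Fin N) =>
        σ.symm 0 = bm ∧ NC N d σ (bm:ℕ) ∧ Kc bm b σ = 0).card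
      = (univ.filter fun σ : Equiv.Perm (Fin N) =>
        σ.symm 0 = bm ∧ NC N d σ (bm:ℕ)).card := by
  have hsplit : (univ.filter fun σ : Equiv.Perm (Fin N) =>
      σ.symm 0 = bm ∧ NC N d σ (bm:ℕ)).card
      = ∑ i ∈ Finset.range ((bm:ℕ) + 1),
        ((univ.filter fun σ : Equiv.Perm (Fin N) =>
          σ.symm 0 = bm ∧ NC N d σ (bm:ℕ)).filter (fun σ => Kc bm b σ = i)).card := by
    apply Finset.card_eq_sum_card_fiberwise (f := fun σ => Kc bm b σ)
    intro σ _
    simp only [Finset.mem_coe, Finset.mem_range]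
    exact Nat.lt_succ_of_le (kc_le bm b σ)
  simp only [Finset.filter_filter] at hsplit
  rw [hsplit]
  have : ∀ i ∈ Finset.range ((bm:ℕ) + 1),
      (univ.filter fun σ : Equiv.Perm (Fin N) =>
        (σ.symm 0 = bm ∧ NC N d σ (bm:ℕ)) ∧ Kc bm b σ = i).card
      = (univ.filter fun σ : Equiv.Perm (Fin N) =>
        σ.symm 0 = bm ∧ NC N d σ (bm:ℕ) ∧ Kc bm b σ = 0).card := by
    intro i hi
    simp only [Finset.mem_range] at hi
    rw [← equal_K hb (by omega : i ≤ (bm:ℕ))]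
    congr 1
    ext σ
    simp only [mem_filter, mem_univ, true_and]
    tauto
  rw [Finset.sum_congr rfl this, Finset.sum_const, Finset.card_range, smul_eq_mul]

lemma card_D2 [NeZero N] {bm b : Fin N} (hb : (bm:ℕ) + 1 = (b:ℕ)) :
    (univ.filter fun σ : Equiv.Perm (Fin N) =>
        σ.symm 0 = b ∧ MinAt σ (b:ℕ) bm ∧ NC N d σ (bm:ℕ)).card
      = (univ.filter fun σ : Equiv.Perm (Fin N) =>
        σ.symm 0 = bm ∧ NC N d σ (bm:ℕ) ∧ Kc bm b σ = 0).card := by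
  have hbmb : bm ≠ b := fun h => by have := congrArg Fin.val h; omega
  have hswap_lt : ∀ t : Fin N, (t:ℕ) < (bm:ℕ) → Equiv.swap bm b t = t := by
    intro t ht
    exact Equiv.swap_apply_of_ne_of_ne
      (fun h => by have := congrArg Fin.val h; omega)
      (fun h => by have := congrArg Fin.val h; omega)
  have happ : ∀ (σ : Equiv.Perm (Fin N)) (t : Fin N), (t:ℕ) < (bm:ℕ) →
      ((Equiv.swap bm b).trans σ) t = σ t := by
    intro σ t ht
    simp only [Equiv.trans_apply, hswap_lt t ht]
  have hrel : ∀ σ : Equiv.Perm (Fin N), ∀ x y : Fin N, (x:ℕ) < (bm:ℕ) → (y:ℕ) < (bm:ℕ) →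
      (σ x < σ y ↔ ((Equiv.swap bm b).trans σ) x < ((Equiv.swap bm b).trans σ) y) := by
    intro σ x y hx hy
    rw [happ σ x hx, happ σ y hy]
  have hK0 : ∀ σ : Equiv.Perm (Fin N), (Kc bm b σ = 0 ↔
      ∀ t : Fin N, (t:ℕ) < (bm:ℕ) → σ b < σ t) := by
    intro σ
    simp only [Kc, KS]
    rw [Finset.card_eq_zero, Finset.filter_eq_empty_iff]
    constructor
    · intro h t ht
      have := h (mem_univ t)
      simp only [ht, true_and, not_lt] at this
      have hne : σ t ≠ σ b := fun hh => by
        have : t = b := σ.injective hh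
        subst this
        omega
      exact lt_of_le_of_ne this (Ne.symm hne)

    · intro h t _
      simp only [not_and, not_lt]
      intro ht
      exact (h t ht).le
  apply card_nbij' (fun σ => (Equiv.swap bm b).trans σ) (fun σ => (Equiv.swap bm b).trans σ)
  · intro σ hσ
    simp only [mem_coe, mem_filter, mem_univ, true_and] at hσ ⊢
    obtain ⟨h0, hmin, hnc⟩ := hσ
    refine ⟨?_, ?_, ?_⟩
    · rw [Equiv.symm_trans_apply, h0, Equiv.symm_swap, Equiv.swap_apply_right]
    · exact nc_of_rel (hrel σ) hnc
    · rw [hK0]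
      intro t ht
      have h1 : ((Equiv.swap bm b).trans σ) b = σ bm := by
        simp [Equiv.trans_apply, Equiv.swap_apply_right]
      rw [h1, happ σ t ht]
      exact hmin.2 t (by omega) (fun h => by have := congrArg Fin.val h; omega)
  · intro σ hσ
    simp only [mem_coe, mem_filter, mem_univ, true_and] at hσ ⊢
    obtain ⟨h0, hnc, hK⟩ := hσ
    rw [hK0] at hK
    refine ⟨?_, ?_, ?_⟩
    · rw [Equiv.symm_trans_apply, h0, Equiv.symm_swap, Equiv.swap_apply_left]
    · constructor
      · omega
      · intro t ht htne
        have ht' : (t:ℕ) < (bm:ℕ) := by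
          have := Fin.val_ne_of_ne htne
          omega
        have h1 : ((Equiv.swap bm b).trans σ) bm = σ b := by
          simp [Equiv.trans_apply, Equiv.swap_apply_left]
        rw [h1, happ σ t ht']
        exact hK t ht'
    · exact nc_of_rel (hrel σ) hnc
  · intro σ _
    ext x
    simp [Equiv.trans_apply, Equiv.swap_apply_self]
  · intro σ _
    ext x
    simp [Equiv.trans_apply, Equiv.swap_apply_self]

lemma card_Mset_eq [NeZero N] {b : Fin N} {p p' : Fin N} (hp : (p:ℕ) < (b:ℕ))
    (hp' : (p':ℕ) < (b:ℕ)) :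
    (univ.filter fun σ : Equiv.Perm (Fin N) => σ.symm 0 = b ∧ MinAt σ (b:ℕ) p).card
      = (univ.filter fun σ : Equiv.Perm (Fin N) => σ.symm 0 = b ∧ MinAt σ (b:ℕ) p').card := by
  have hpb : p ≠ b := fun h => by have := congrArg Fin.val h; omega
  have hp'b : p' ≠ b := fun h => by have := congrArg Fin.val h; omega
  have key : ∀ (q q' : Fin N), (q:ℕ) < (b:ℕ) → (q':ℕ) < (b:ℕ) →
      ∀ σ : Equiv.Perm (Fin N), (σ.symm 0 = b ∧ MinAt σ (b:ℕ) q) →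
      (((Equiv.swap q q').trans σ).symm 0 = b ∧ MinAt ((Equiv.swap q q').trans σ) (b:ℕ) q') := by
    intro q q' hq hq' σ ⟨h0, hmin⟩
    have hqb : q ≠ b := fun h => by have := congrArg Fin.val h; omega
    have hq'b : q' ≠ b := fun h => by have := congrArg Fin.val h; omega
    constructor
    · rw [Equiv.symm_trans_apply, h0, Equiv.symm_swap,
        Equiv.swap_apply_of_ne_of_ne (Ne.symm hqb) (Ne.symm hq'b)]
    · refine ⟨hq', fun t ht htne => ?_⟩
      have h1 : ((Equiv.swap q q').trans σ) q' = σ q := by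
        simp [Equiv.trans_apply, Equiv.swap_apply_right]
      have h2 : ((Equiv.swap q q').trans σ) t = σ (Equiv.swap q q' t) := rfl
      rw [h1, h2]
      have hlt : ((Equiv.swap q q' t : Fin N) : ℕ) < (b:ℕ) := by
        rcases swap_cases q q' t with ⟨-, h4⟩ | ⟨-, h4⟩ | ⟨-, -, h4⟩ <;> rw [h4] <;>
          first | exact hq' | exact hq | exact ht
      have hne : Equiv.swap q q' t ≠ q := by
        intro h
        have := (Equiv.swap q q').injective (h.trans (Equiv.swap_apply_right q q').symm)
        exact htne this
      exact hmin.2 _ hlt hne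
  apply card_nbij' (fun σ => (Equiv.swap p p').trans σ) (fun σ => (Equiv.swap p' p).trans σ)
  · intro σ hσ
    simp only [mem_coe, mem_filter, mem_univ, true_and] at hσ ⊢
    exact key p p' hp hp' σ hσ
  · intro σ hσ
    simp only [mem_coe, mem_filter, mem_univ, true_and] at hσ ⊢
    exact key p' p hp' hp σ hσ
  · intro σ _
    ext x
    simp [Equiv.trans_apply, Equiv.swap_comm p' p, Equiv.swap_apply_self]
  · intro σ _
    ext x
    simp [Equiv.trans_apply, Equiv.swap_comm p' p, Equiv.swap_apply_self]

lemma card_fiber' [NeZero N] (b : Fin N) :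
    (univ.filter fun σ : Equiv.Perm (Fin N) => σ.symm 0 = b).card
      = Nat.factorial (N - 1) := by
  have h := card_fiber (N := N) b
  have hN : 0 < N := Fin.pos b
  have hfac : Nat.factorial N = N * Nat.factorial (N - 1) := by
    conv_lhs => rw [show N = (N - 1) + 1 by omega]
    rw [Nat.factorial_succ]
    congr 1
    omega
  rw [hfac] at h
  exact Nat.eq_of_mul_eq_mul_left hN h

lemma recursion [NeZero N] {bm b : Fin N} (hb : (bm:ℕ) + 1 = (b:ℕ))
    (hd2 : d + 2 ≤ (b:ℕ)) :
    (b:ℕ) * (univ.filter fun σ : Equiv.Perm (Fin N) =>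
        σ.symm 0 = b ∧ NC N d σ (b:ℕ)).card
      = d * Nat.factorial (N - 1)
        + (univ.filter fun σ : Equiv.Perm (Fin N) =>
            σ.symm 0 = bm ∧ NC N d σ (bm:ℕ)).card := by
  have hb1 : 1 ≤ (b:ℕ) := by omega
  have hbN : (b:ℕ) ≤ N := b.isLt.le
  have hNpos : 0 < N := Fin.pos b
  set p0 : Fin N := ⟨0, hNpos⟩ with hp0
  have hp0b : (p0:ℕ) < (b:ℕ) := by show 0 < (b:ℕ); omega
  set X := (univ.filter fun σ : Equiv.Perm (Fin N) =>
      σ.symm 0 = b ∧ MinAt σ (b:ℕ) p0).card with hX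
  have hMX : ∀ p : Fin N, (p:ℕ) < (b:ℕ) →
      (univ.filter fun σ : Equiv.Perm (Fin N) =>
        σ.symm 0 = b ∧ MinAt σ (b:ℕ) p).card = X := by
    intro p hp
    rw [hX]
    exact card_Mset_eq hp hp0b
  -- (N-1)! = b * X
  have hbX : (b:ℕ) * X = Nat.factorial (N - 1) := by
    have h1 : (univ.filter fun σ : Equiv.Perm (Fin N) => σ.symm 0 = b).card
        = ∑ p ∈ T N (b:ℕ), (univ.filter fun σ : Equiv.Perm (Fin N) =>
            σ.symm 0 = b ∧ MinAt σ (b:ℕ) p).card := by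
      have := split_card (N := N) (fun σ => σ.symm 0 = b) hb1 hbN
      convert this using 2 <;> congr
    rw [card_fiber'] at h1
    have h2 : ∀ p ∈ T N (b:ℕ),
        (univ.filter fun σ : Equiv.Perm (Fin N) =>
          σ.symm 0 = b ∧ MinAt σ (b:ℕ) p).card = X := by
      intro p hp
      simp only [T, mem_filter, mem_univ, true_and] at hp
      exact hMX p hp
    rw [Finset.sum_congr rfl h2, Finset.sum_const, card_T hbN, smul_eq_mul] at h1
    omega
  -- split S
  have hS : (univ.filter fun σ : Equiv.Perm (Fin N) =>
      σ.symm 0 = b ∧ NC N d σ (b:ℕ)).card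
      = ∑ p ∈ T N (b:ℕ), (univ.filter fun σ : Equiv.Perm (Fin N) =>
          (σ.symm 0 = b ∧ NC N d σ (b:ℕ)) ∧ MinAt σ (b:ℕ) p).card := by
    have := split_card (N := N) (fun σ => σ.symm 0 = b ∧ NC N d σ (b:ℕ)) hb1 hbN
    convert this using 2 <;> congr
  -- evaluate the summands
  have hbmT : bm ∈ (T N (b:ℕ)).filter (fun p : Fin N => ¬ ((p:ℕ) < d)) := by
    simp only [T, mem_filter, mem_univ, true_and, not_lt]
    omega
  have hsum : ∑ p ∈ T N (b:ℕ),
      (univ.filter fun σ : Equiv.Perm (Fin N) =>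
        (σ.symm 0 = b ∧ NC N d σ (b:ℕ)) ∧ MinAt σ (b:ℕ) p).card
      = d * X + (univ.filter fun σ : Equiv.Perm (Fin N) =>
          σ.symm 0 = b ∧ MinAt σ (b:ℕ) bm ∧ NC N d σ (bm:ℕ)).card := by
    rw [← Finset.sum_filter_add_sum_filter_not (T N (b:ℕ)) (fun p : Fin N => (p:ℕ) < d)]
    congr 1
    · -- p < d part
      have heq : ∀ p ∈ (T N (b:ℕ)).filter (fun p : Fin N => (p:ℕ) < d),
          (univ.filter fun σ : Equiv.Perm (Fin N) =>
            (σ.symm 0 = b ∧ NC N d σ (b:ℕ)) ∧ MinAt σ (b:ℕ) p).card = X := by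
        intro p hp
        simp only [T, mem_filter, mem_univ, true_and] at hp
        rw [← hMX p hp.1]
        congr 1
        ext σ
        simp only [mem_filter, mem_univ, true_and]
        constructor
        · rintro ⟨⟨h1, _⟩, h3⟩; exact ⟨h1, h3⟩
        · rintro ⟨h1, h3⟩; exact ⟨⟨h1, nc_of_min_lt_d σ h3 hp.2⟩, h3⟩
      rw [Finset.sum_congr rfl heq, Finset.sum_const, smul_eq_mul]
      congr 1
      have : (T N (b:ℕ)).filter (fun p : Fin N => (p:ℕ) < d) = T N d := by
        ext p
        simp only [T, mem_filter, mem_univ, true_and]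
        omega
      rw [this, card_T (by omega)]
    · -- ¬ p < d part
      rw [Finset.sum_eq_single_of_mem bm hbmT]
      · congr 1
        ext σ
        simp only [mem_filter, mem_univ, true_and]
        constructor
        · rintro ⟨⟨h1, h2⟩, h3⟩
          refine ⟨h1, h3, ?_⟩
          have := (nc_succ_iff σ h3 hb).mp h2
          have hrw : ((b:ℕ) - 1) = (bm:ℕ) := by omega
          rwa [hrw] at this
        · rintro ⟨h1, h3, h2⟩
          refine ⟨⟨h1, ?_⟩, h3⟩
          rw [nc_succ_iff σ h3 hb]
          have hrw : ((b:ℕ) - 1) = (bm:ℕ) := by omega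
          rwa [hrw]
      · intro p hp hpbm
        simp only [T, mem_filter, mem_univ, true_and, not_lt] at hp
        have hpb2 : (p:ℕ) + 2 ≤ (b:ℕ) := by
          have : (p:ℕ) ≠ (bm:ℕ) := fun h => hpbm (Fin.ext h)
          omega
        rw [Finset.card_eq_zero, Finset.filter_eq_empty_iff]
        rintro σ _ ⟨⟨_, h2⟩, h3⟩
        exact not_nc_of_min_mid σ h3 hp.2 hpb2 h2
  rw [hS, hsum]
  rw [Nat.mul_add, ← Nat.mul_assoc, Nat.mul_comm (b:ℕ) d, Nat.mul_assoc, hbX]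
  congr 1
  rw [card_D2 hb, ← hb]
  exact sum_K hb

lemma nc_trivial (σ : Equiv.Perm (Fin N)) {b : ℕ} (hb : b ≤ d + 1) : NC N d σ b :=
  fun m hdm hm2 _ => by omega

lemma closed_form [NeZero N] (hd : 1 ≤ d) : ∀ n : ℕ, d ≤ n → ∀ hnN : n < N,
    (univ.filter fun σ : Equiv.Perm (Fin N) =>
        σ.symm 0 = (⟨n, hnN⟩ : Fin N) ∧ NC N d σ n).card * Nat.factorial n
      = Nat.factorial (N - 1)
        * (d * ∑ i ∈ Finset.Icc (d + 1) (n + 1), Nat.factorial (i - 2)) := by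
  intro n
  induction n using Nat.strong_induction_on with
  | _ n ih =>
    intro hdn hnN
    have hfd : d * Nat.factorial (d - 1) = Nat.factorial d := by
      conv_rhs => rw [show d = (d - 1) + 1 by omega, Nat.factorial_succ,
        show d - 1 + 1 = d by omega]
    rcases Nat.lt_or_ge n (d + 2) with hlow | hhigh
    · -- base cases : NC is trivial
      have hfil : (univ.filter fun σ : Equiv.Perm (Fin N) =>
          σ.symm 0 = (⟨n, hnN⟩ : Fin N) ∧ NC N d σ n)
          = univ.filter fun σ : Equiv.Perm (Fin N) => σ.symm 0 = (⟨n, hnN⟩ : Fin N) := by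
        ext σ
        simp only [mem_filter, mem_univ, true_and, and_iff_left_iff_imp]
        exact fun _ => nc_trivial σ (by omega)
      rw [hfil, card_fiber']
      have hempty : Finset.Icc (d + 1) d = ∅ := by
        rw [Finset.Icc_eq_empty_iff]; omega
      rcases (by omega : n = d ∨ n = d + 1) with h | h <;> rw [h]
      · rw [Finset.sum_Icc_succ_top (by omega), hempty, Finset.sum_empty, zero_add,
          show d + 1 - 2 = d - 1 by omega, hfd]
      · rw [Finset.sum_Icc_succ_top (by omega), Finset.sum_Icc_succ_top (by omega),
          hempty, Finset.sum_empty, zero_add,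
          show d + 1 - 2 = d - 1 by omega, show d + 1 + 1 - 2 = d by omega]
        rw [Nat.mul_add, Nat.mul_add, hfd, Nat.factorial_succ]
        ring
    · -- inductive step
      have hbm : n - 1 < N := by omega
      have hrec := recursion (N := N) (d := d) (bm := ⟨n - 1, hbm⟩) (b := ⟨n, hnN⟩)
        (by simp; omega) (by simp; omega)
      simp only [Fin.val_mk] at hrec
      have hih := ih (n - 1) (by omega) (by omega) hbm
      have hfac : Nat.factorial n = n * Nat.factorial (n - 1) := by
        conv_lhs => rw [show n = (n - 1) + 1 by omega, Nat.factorial_succ,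
          show n - 1 + 1 = n by omega]
      have hsum : ∑ i ∈ Finset.Icc (d + 1) (n + 1), Nat.factorial (i - 2)
          = (∑ i ∈ Finset.Icc (d + 1) n, Nat.factorial (i - 2))
            + Nat.factorial (n - 1) := by
        rw [Finset.sum_Icc_succ_top (by omega), show n + 1 - 2 = n - 1 by omega]
      calc (univ.filter fun σ : Equiv.Perm (Fin N) =>
            σ.symm 0 = (⟨n, hnN⟩ : Fin N) ∧ NC N d σ n).card * Nat.factorial n
          = (n * (univ.filter fun σ : Equiv.Perm (Fin N) =>
              σ.symm 0 = (⟨n, hnN⟩ : Fin N) ∧ NC N d σ n).card) * Nat.factorial (n - 1) := by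
            rw [hfac]; ring
        _ = (d * Nat.factorial (N - 1)
              + (univ.filter fun σ : Equiv.Perm (Fin N) =>
                σ.symm 0 = (⟨n - 1, hbm⟩ : Fin N) ∧ NC N d σ (n - 1)).card)
            * Nat.factorial (n - 1) := by rw [hrec]
        _ = d * Nat.factorial (N - 1) * Nat.factorial (n - 1)
              + (univ.filter fun σ : Equiv.Perm (Fin N) =>
                σ.symm 0 = (⟨n - 1, hbm⟩ : Fin N) ∧ NC N d σ (n - 1)).card
                * Nat.factorial (n - 1) := by ring
        _ = d * Nat.factorial (N - 1) * Nat.factorial (n - 1)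
              + Nat.factorial (N - 1)
                * (d * ∑ i ∈ Finset.Icc (d + 1) ((n - 1) + 1), Nat.factorial (i - 2)) := by
            rw [hih]
        _ = Nat.factorial (N - 1)
            * (d * ∑ i ∈ Finset.Icc (d + 1) (n + 1), Nat.factorial (i - 2)) := by
            rw [show (n - 1) + 1 = n by omega, hsum]
            ring

end SecAux



open Finset SecAux

open scoped Classical in
/-- Best-1 sliding-window secretary problem with `N` applicants, window size `K = 2`,
threshold `d ≥ 1`: the probability of winning equals
`2/N + (d/N)·Σ_{j=d+3}^{N} (Σ_{i=d+1}^{j} (i-2)!)/(j-1)!`. -/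
theorem stmt5 (N d : ℕ) (hd : 1 ≤ d) (hdN : d + 2 ≤ N) :
    ((Finset.univ.filter (fun σ : Equiv.Perm (Fin N) => WinK2 N d σ)).card : ℚ)
        / (Nat.factorial N)
      = 2 / (N : ℚ) + ((d : ℚ) / (N : ℚ)) *
          ∑ j ∈ Finset.Icc (d + 3) N,
            (∑ i ∈ Finset.Icc (d + 1) j, (Nat.factorial (i - 2) : ℚ))
              / (Nat.factorial (j - 1) : ℚ) := by
  haveI : NeZero N := ⟨by omega⟩
  have hNpos : 0 < N := by omega
  set g : ℕ → ℕ := fun k => (Finset.univ.filter fun σ : Equiv.Perm (Fin N) =>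
    ((σ.symm 0 : Fin N) : ℕ) = k ∧ NC N d σ k).card with hgdef
  have hgA : ∀ (k : ℕ) (hk : k < N), g k
      = (Finset.univ.filter fun σ : Equiv.Perm (Fin N) =>
          σ.symm 0 = (⟨k, hk⟩ : Fin N) ∧ NC N d σ k).card := by
    intro k hk
    show (Finset.univ.filter fun σ : Equiv.Perm (Fin N) =>
      ((σ.symm 0 : Fin N) : ℕ) = k ∧ NC N d σ k).card = _
    congr 1
    ext σ
    simp only [mem_filter, mem_univ, true_and]
    constructor
    · rintro ⟨h1, h2⟩; exact ⟨Fin.ext h1, h2⟩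
    · rintro ⟨h1, h2⟩; exact ⟨by rw [h1], h2⟩
  have hcardW : (Finset.univ.filter (fun σ : Equiv.Perm (Fin N) => WinK2 N d σ)).card
      = ∑ k ∈ Finset.Icc d (N - 1), g k := by
    have hW : (Finset.univ.filter (fun σ : Equiv.Perm (Fin N) => WinK2 N d σ))
        = Finset.univ.filter (fun σ : Equiv.Perm (Fin N) =>
            d ≤ ((σ.symm 0 : Fin N) : ℕ) ∧ NC N d σ ((σ.symm 0 : Fin N) : ℕ)) := by
      ext σ
      simp only [mem_filter, mem_univ, true_and]
      exact win_iff σ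
    rw [hW]
    rw [Finset.card_eq_sum_card_fiberwise (f := fun σ => ((σ.symm 0 : Fin N) : ℕ))
      (t := Finset.Icc d (N - 1)) (fun σ hσ => by
        simp only [mem_coe, mem_filter, mem_univ, true_and] at hσ
        simp only [Finset.mem_coe, Finset.mem_Icc]
        have := (σ.symm 0).isLt
        exact ⟨hσ.1, by omega⟩)]
    refine Finset.sum_congr rfl fun k hk => ?_
    simp only [Finset.mem_Icc] at hk
    show _ = (Finset.univ.filter fun σ : Equiv.Perm (Fin N) =>
      ((σ.symm 0 : Fin N) : ℕ) = k ∧ NC N d σ k).card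
    rw [Finset.filter_filter]
    congr 1
    ext σ
    simp only [mem_filter, mem_univ, true_and]
    constructor
    · rintro ⟨⟨h1, h2⟩, h3⟩
      exact ⟨h3, by rwa [h3] at h2⟩
    · rintro ⟨h3, h2⟩
      exact ⟨⟨by omega, by rwa [← h3] at h2⟩, h3⟩
  have hgbase : ∀ k, d ≤ k → k ≤ d + 1 → ∀ hk : k < N, g k = Nat.factorial (N - 1) := by
    intro k h1 h2 hk
    rw [hgA k hk]
    have hfil : (Finset.univ.filter fun σ : Equiv.Perm (Fin N) =>
        σ.symm 0 = (⟨k, hk⟩ : Fin N) ∧ NC N d σ k)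
        = Finset.univ.filter fun σ : Equiv.Perm (Fin N) =>
            σ.symm 0 = (⟨k, hk⟩ : Fin N) := by
      ext σ
      simp only [mem_filter, mem_univ, true_and, and_iff_left_iff_imp]
      exact fun _ => nc_trivial σ h2
    rw [hfil, card_fiber']
  have hg : ∀ k, d ≤ k → ∀ hk : k < N,
      g k * Nat.factorial k = Nat.factorial (N - 1)
        * (d * ∑ i ∈ Finset.Icc (d + 1) (k + 1), Nat.factorial (i - 2)) := by
    intro k h1 hk
    rw [hgA k hk]
    exact closed_form hd k h1 hk
  have hsplit : ∑ k ∈ Finset.Icc d (N - 1), g k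
      = Nat.factorial (N - 1) + Nat.factorial (N - 1)
        + ∑ k ∈ Finset.Icc (d + 2) (N - 1), g k := by
    rw [← Finset.insert_Icc_add_one_left_eq_Icc (by omega : d ≤ N - 1),
      Finset.sum_insert (by simp only [Finset.mem_Icc]; omega),
      ← Finset.insert_Icc_add_one_left_eq_Icc (by omega : d + 1 ≤ N - 1),
      Finset.sum_insert (by simp only [Finset.mem_Icc]; omega)]
    rw [hgbase d le_rfl (by omega) (by omega), hgbase (d + 1) (by omega) le_rfl (by omega)]
    ring
  have hNfac : Nat.factorial N = N * Nat.factorial (N - 1) := by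
    conv_lhs => rw [show N = (N - 1) + 1 by omega, Nat.factorial_succ,
      show N - 1 + 1 = N by omega]
  have hNfacQ : (Nat.factorial N : ℚ) = (N : ℚ) * (Nat.factorial (N - 1) : ℚ) := by
    exact_mod_cast congrArg (Nat.cast : ℕ → ℚ) hNfac
  have hfacne : ∀ m : ℕ, (Nat.factorial m : ℚ) ≠ 0 :=
    fun m => Nat.cast_ne_zero.mpr (Nat.factorial_ne_zero m)
  have hNne : (N : ℚ) ≠ 0 := Nat.cast_ne_zero.mpr (by omega)
  have hterm : ∀ k ∈ Finset.Icc (d + 2) (N - 1),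
      (g k : ℚ) / (Nat.factorial N : ℚ)
        = ((d : ℚ) / (N : ℚ)) * ((∑ i ∈ Finset.Icc (d + 1) (k + 1),
            (Nat.factorial (i - 2) : ℚ)) / (Nat.factorial (k + 1 - 1) : ℚ)) := by
    intro k hk
    simp only [Finset.mem_Icc] at hk
    have hkN : k < N := by omega
    have h := hg k (by omega) hkN
    have hq : (g k : ℚ) * (Nat.factorial k : ℚ)
        = (Nat.factorial (N - 1) : ℚ) * ((d : ℚ)
          * ∑ i ∈ Finset.Icc (d + 1) (k + 1), (Nat.factorial (i - 2) : ℚ)) := by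
      exact_mod_cast h
    rw [show k + 1 - 1 = k by omega, hNfacQ]
    field_simp
    linear_combination hq
  have hreindex : ∑ k ∈ Finset.Icc (d + 2) (N - 1),
      ((∑ i ∈ Finset.Icc (d + 1) (k + 1), (Nat.factorial (i - 2) : ℚ))
        / (Nat.factorial (k + 1 - 1) : ℚ))
      = ∑ j ∈ Finset.Icc (d + 3) N,
          (∑ i ∈ Finset.Icc (d + 1) j, (Nat.factorial (i - 2) : ℚ))
            / (Nat.factorial (j - 1) : ℚ) := by
    apply Finset.sum_nbij' (i := fun k => k + 1) (j := fun j => j - 1)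
    · intro k hk; simp only [Finset.mem_Icc] at *; omega
    · intro j hj; simp only [Finset.mem_Icc] at *; omega
    · intro k hk; omega
    · intro j hj; simp only [Finset.mem_Icc] at hj; omega
    · intro k hk; rfl
  rw [hcardW, hsplit]
  push_cast
  rw [add_div, add_div, Finset.sum_div]
  rw [Finset.sum_congr rfl hterm, ← Finset.mul_sum, hreindex]
  congr 1
  rw [hNfacQ]
  field_simp
  ring
end

section
/- In the Best-1 sliding-window secretary problem with window size K ≥ N/2 and threshold d = 0, the probability of winning equals K/N + (1/N) Σ_{j=K+1}^{N} (1 − Σ_{m=1}^{j-K} 1/(m+K−1)). -/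
/-- In the Best-1 sliding-window problem with window size `K` (0-indexed positions,
smaller rank better), position `m` holds a *candidate* if its rank beats every other
applicant seen by the time the window front reaches `m`, i.e. every other position
`t < m + K`. -/
def IsCandidate (N K : ℕ) (σ : Equiv.Perm (Fin N)) (m : Fin N) : Prop :=
  ∀ t : Fin N, (t : ℕ) < (m : ℕ) + K → t ≠ m → σ m < σ t

/-- With threshold `d = 0` the interviewer selects the very first candidate (sliding
rule); she wins iff that candidate is the overall best applicant (rank `0`). -/
def WinD0 (N K : ℕ) (σ : Equiv.Perm (Fin N)) : Prop :=
  ∃ m : Fin N, IsCandidate N K σ m ∧ (σ m : ℕ) = 0 ∧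
    ∀ m' : Fin N, (m' : ℕ) < (m : ℕ) → ¬ IsCandidate N K σ m'

open Finset Equiv

variable {N : ℕ}

def MinOn (S : Finset (Fin N)) (s : Fin N) (σ : Equiv.Perm (Fin N)) : Prop :=
  ∀ t ∈ S, t ≠ s → σ s < σ t

lemma card_filter_iff {α : Type*} [Fintype α] {p q : α → Prop}
    {ip : DecidablePred p} {iq : DecidablePred q} (h : ∀ a, p a ↔ q a) :
    (@Finset.filter _ p ip Finset.univ).card = (@Finset.filter _ q iq Finset.univ).card := by
  apply Finset.card_nbij id
  · intro a ha
    rw [Finset.mem_coe, Finset.mem_filter] at ha ⊢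
    exact ⟨ha.1, (h a).1 ha.2⟩
  · exact fun a _ b _ hab => hab
  · intro a ha
    rw [Finset.mem_coe, Finset.mem_filter] at ha
    refine ⟨a, ?_, rfl⟩
    rw [Finset.mem_coe, Finset.mem_filter]
    exact ⟨ha.1, (h a).2 ha.2⟩

open scoped Classical in
lemma keyG (S : Finset (Fin N)) (hS : S.Nonempty) (Q : Equiv.Perm (Fin N) → Prop)
    (hQ : ∀ σ, ∀ s ∈ S, ∀ s' ∈ S, Q σ → Q (σ * Equiv.swap s s'))
    (s₀ : Fin N) (hs₀ : s₀ ∈ S) :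
    S.card * (univ.filter fun σ => Q σ ∧ MinOn S s₀ σ).card
      = (univ.filter Q).card := by
  classical
  set f : Equiv.Perm (Fin N) → Fin N :=
    fun σ => σ.symm ((S.image σ).min' (hS.image σ)) with hf
  have hmem : ∀ σ, f σ ∈ S := by
    intro σ
    have h := Finset.min'_mem (S.image σ) (hS.image σ)
    rcases Finset.mem_image.1 h with ⟨t, ht, hσt⟩
    have : f σ = t := by
      rw [hf]; simp only [← hσt, Equiv.symm_apply_apply]
    rwa [this]
  have hiff : ∀ σ, ∀ s ∈ S, (f σ = s ↔ MinOn S s σ) := by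
    intro σ s hs
    constructor
    · intro h t ht hts
      have hmin : σ s = (S.image σ).min' (hS.image σ) := by
        rw [← h]; simp [hf]
      have h2 : (S.image σ).min' (hS.image σ) ≤ σ t :=
        Finset.min'_le _ _ (Finset.mem_image_of_mem σ ht)
      rw [← hmin] at h2
      refine lt_of_le_of_ne h2 ?_
      intro he
      exact hts (σ.injective he.symm)
    · intro h
      have h1 : (S.image σ).min' (hS.image σ) ≤ σ s :=
        Finset.min'_le _ _ (Finset.mem_image_of_mem σ hs)
      rcases Finset.mem_image.1 (Finset.min'_mem (S.image σ) (hS.image σ)) with ⟨t, ht, hσt⟩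
      have h2 : σ s ≤ σ t := by
        rcases eq_or_ne t s with rfl | hts
        · exact le_rfl
        · exact le_of_lt (h t ht hts)
      have : σ s = (S.image σ).min' (hS.image σ) := le_antisymm (hσt ▸ h2) h1
      rw [hf]; simp [← this]
  have hcardsum : (univ.filter Q).card
      = ∑ s ∈ S, ((univ.filter Q).filter fun σ => f σ = s).card :=
    Finset.card_eq_sum_card_fiberwise (fun σ _ => hmem σ)
  have hfiber : ∀ s ∈ S,
      ((univ.filter Q).filter fun σ => f σ = s).card
        = ((univ.filter Q).filter fun σ => f σ = s₀).card := by
    intro s hs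
    have hswapS : ∀ x, Equiv.swap s s₀ x ∈ S ↔ x ∈ S := by
      intro x
      rcases eq_or_ne x s with rfl | h1
      · simp [Equiv.swap_apply_left, hs, hs₀]
      rcases eq_or_ne x s₀ with rfl | h2
      · simp [Equiv.swap_apply_right, hs, hs₀]
      rw [Equiv.swap_apply_of_ne_of_ne h1 h2]
  -- image of swap on S is S
    have himgS : S.image (Equiv.swap s s₀) = S := by
      ext x
      simp only [Finset.mem_image]
      constructor
      · rintro ⟨y, hy, rfl⟩; exact (hswapS y).2 hy
      · intro hx
        exact ⟨Equiv.swap s s₀ x, (hswapS x).2 hx, Equiv.swap_apply_self _ _ _⟩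
    have hfswap : ∀ σ : Equiv.Perm (Fin N),
        f (σ * Equiv.swap s s₀) = Equiv.swap s s₀ (f σ) := by
      intro σ
      have himg : S.image ⇑(σ * Equiv.swap s s₀) = S.image σ := by
        rw [show ⇑(σ * Equiv.swap s s₀) = σ ∘ ⇑(Equiv.swap s s₀) from rfl,
          ← Finset.image_image, himgS]
      rw [hf]
      simp only [himg]
      rw [Equiv.symm_apply_eq]
      simp [Equiv.Perm.mul_apply, Equiv.swap_apply_self, hf]
    apply Finset.card_nbij' (fun σ => σ * Equiv.swap s s₀) (fun σ => σ * Equiv.swap s s₀)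
    · intro σ hσ
      simp only [Finset.mem_coe, Finset.mem_filter, Finset.mem_univ, true_and] at hσ ⊢
      exact ⟨hQ σ s hs s₀ hs₀ hσ.1, by rw [hfswap, hσ.2, Equiv.swap_apply_left]⟩
    · intro σ hσ
      simp only [Finset.mem_coe, Finset.mem_filter, Finset.mem_univ, true_and] at hσ ⊢
      exact ⟨hQ σ s hs s₀ hs₀ hσ.1, by rw [hfswap, hσ.2, Equiv.swap_apply_right]⟩
    · intro σ hσ
      beta_reduce
      rw [mul_assoc, Equiv.swap_mul_self, mul_one]
    · intro σ hσ
      beta_reduce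
      rw [mul_assoc, Equiv.swap_mul_self, mul_one]
  have : ∑ s ∈ S, ((univ.filter Q).filter fun σ => f σ = s).card
      = S.card * ((univ.filter Q).filter fun σ => f σ = s₀).card := by
    rw [Finset.sum_congr rfl hfiber, Finset.sum_const, smul_eq_mul]
  have hfil : ((univ.filter Q).filter fun σ => f σ = s₀)
      = univ.filter fun σ => Q σ ∧ MinOn S s₀ σ := by
    rw [Finset.filter_filter]
    apply Finset.filter_congr
    intro σ _
    rw [hiff σ s₀ hs₀]
  rw [hcardsum, this, hfil]

open scoped Classical in
lemma cardA (hN : 0 < N) (p : Fin N) :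
    N * (univ.filter fun σ : Equiv.Perm (Fin N) => (σ p : ℕ) = 0).card = N.factorial := by
  classical
  have h := keyG (N := N) univ ⟨p, mem_univ p⟩ (fun _ => True)
    (fun _ _ _ _ _ _ => trivial) p (mem_univ p)
  have hmin : ∀ σ : Equiv.Perm (Fin N), (MinOn univ p σ ↔ (σ p : ℕ) = 0) := by
    intro σ
    constructor
    · intro h
      by_contra h0
      have hz : (⟨0, hN⟩ : Fin N) ≠ σ p := by
        intro he; exact h0 (by rw [← he])
      have ht : σ.symm ⟨0, hN⟩ ≠ p := by
        intro he
        exact hz (by rw [← he, Equiv.apply_symm_apply])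
      have := h (σ.symm ⟨0, hN⟩) (mem_univ _) ht
      rw [Equiv.apply_symm_apply] at this
      exact absurd this (by rw [Fin.lt_def]; simp)
    · intro h0 t _ htp
      have : σ t ≠ σ p := fun he => htp (σ.injective he)
      rw [Fin.lt_def, h0]
      exact Nat.pos_of_ne_zero (fun he => this (Fin.ext (he.trans h0.symm)))
  refine Eq.trans ?_ (Eq.trans h ?_)
  · congr 1
    · rw [Finset.card_univ, Fintype.card_fin]
    · exact card_filter_iff (fun σ => by rw [true_and, hmin σ])
  · refine Eq.trans (card_filter_iff (q := fun _ : Equiv.Perm (Fin N) => True)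
      (iq := fun _ => instDecidableTrue) (fun _ => Iff.rfl)) ?_
    rw [Finset.filter_true_of_mem (fun _ _ => trivial), Finset.card_univ,
      Fintype.card_perm, Fintype.card_fin]

open scoped Classical in
lemma cardB {K : ℕ} (hK : 1 ≤ K) (p m : Fin N) (hm : (m : ℕ) + K ≤ (p : ℕ)) :
    ((m : ℕ) + K) *
      (univ.filter fun σ : Equiv.Perm (Fin N) =>
        (σ p : ℕ) = 0 ∧ IsCandidate N K σ m).card
      = (univ.filter fun σ : Equiv.Perm (Fin N) => (σ p : ℕ) = 0).card := by
  classical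
  set S : Finset (Fin N) := univ.filter (fun t : Fin N => (t : ℕ) < (m : ℕ) + K) with hSdef
  have hmS : m ∈ S := by
    simp only [hSdef, mem_filter, mem_univ, true_and]
    omega
  have hScard : S.card = (m : ℕ) + K := by
    rw [hSdef, ← Finset.card_range ((m : ℕ) + K)]
    apply Finset.card_nbij (i := Fin.val)
    · intro t ht
      simp only [mem_coe, mem_filter, mem_univ, true_and] at ht
      simpa using ht
    · intro a _ b _ hab; exact Fin.ext hab
    · intro a ha
      simp only [Finset.coe_range, Set.mem_Iio] at ha
      have haN : a < N := lt_of_lt_of_le ha (le_trans hm (le_of_lt p.isLt))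
      exact ⟨⟨a, haN⟩, by simp [mem_filter, ha], rfl⟩
  have hpS : p ∉ S := by
    simp only [hSdef, mem_filter, mem_univ, true_and]
    omega
  have h := keyG (N := N) S ⟨m, hmS⟩ (fun σ => (σ p : ℕ) = 0)
    (fun σ s hs s' hs' hσ => by
      have h1 : p ≠ s := fun he => hpS (he ▸ hs)
      have h2 : p ≠ s' := fun he => hpS (he ▸ hs')
      show (((σ * Equiv.swap s s') p : Fin N) : ℕ) = 0
      rwa [Equiv.Perm.mul_apply, Equiv.swap_apply_of_ne_of_ne h1 h2]) m hmS
  have hMC : ∀ σ : Equiv.Perm (Fin N), MinOn S m σ ↔ IsCandidate N K σ m := by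
    intro σ
    constructor
    · intro h t ht htm
      exact h t (by simp [hSdef, ht]) htm
    · intro h t ht htm
      simp only [hSdef, mem_filter, mem_univ, true_and] at ht
      exact h t ht htm
  refine Eq.trans ?_ (Eq.trans h ?_)
  · rw [hScard]
    congr 1
    exact card_filter_iff (fun σ => by rw [hMC σ])
  · exact card_filter_iff (fun _ => Iff.rfl)

lemma winChar {N K : ℕ} (hK : 1 ≤ K) (σ : Equiv.Perm (Fin N)) (p : Fin N)
    (hp : (σ p : ℕ) = 0) :
    WinD0 N K σ ↔ ∀ m : Fin N, (m : ℕ) + K ≤ (p : ℕ) → ¬ IsCandidate N K σ m := by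
  constructor
  · rintro ⟨m₀, hc, h0, hmin⟩ m hm
    have hm₀ : m₀ = p := σ.injective (Fin.ext (h0.trans hp.symm))
    subst hm₀
    exact hmin m (by omega)
  · intro h
    refine ⟨p, ?_, hp, ?_⟩
    · intro t ht htp
      have : σ t ≠ σ p := fun he => htp (σ.injective he)
      rw [Fin.lt_def, hp]
      exact Nat.pos_of_ne_zero (fun he => this (Fin.ext (he.trans hp.symm)))
    · intro m' hm' hc
      rcases le_or_gt ((m' : ℕ) + K) (p : ℕ) with h1 | h1
      · exact h m' h1 hc
      · have := hc p h1 (Fin.ne_of_val_ne (by omega))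
        rw [Fin.lt_def, hp] at this
        omega

open scoped Classical in
lemma cardWp {N K : ℕ} (hK : 1 ≤ K) (h2K : N ≤ 2 * K) (p : Fin N) :
    (univ.filter fun σ : Equiv.Perm (Fin N) => WinD0 N K σ ∧ (σ p : ℕ) = 0).card
      + ∑ m ∈ univ.filter (fun m : Fin N => (m : ℕ) + K ≤ (p : ℕ)),
          (univ.filter fun σ : Equiv.Perm (Fin N) =>
            (σ p : ℕ) = 0 ∧ IsCandidate N K σ m).card
      = (univ.filter fun σ : Equiv.Perm (Fin N) => (σ p : ℕ) = 0).card := by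
  classical
  set T := univ.filter (fun m : Fin N => (m : ℕ) + K ≤ (p : ℕ)) with hT
  set B := fun m : Fin N => univ.filter fun σ : Equiv.Perm (Fin N) =>
    (σ p : ℕ) = 0 ∧ IsCandidate N K σ m with hB
  set A := univ.filter fun σ : Equiv.Perm (Fin N) => (σ p : ℕ) = 0 with hA
  have key : ∀ (σ : Equiv.Perm (Fin N)) (a b : Fin N), (a : ℕ) < (b : ℕ) →
      (b : ℕ) + K ≤ (p : ℕ) → IsCandidate N K σ a → IsCandidate N K σ b → False := by
    intro σ a b hab hb hca hcb
    have hpN := p.isLt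
    have h1 : σ a < σ b := hca b (by omega) (Fin.ne_of_val_ne (by omega))
    have h2 : σ b < σ a := hcb a (by omega) (Fin.ne_of_val_ne (by omega))
    exact absurd h2 (not_lt.2 (le_of_lt h1))
  have hdisj : ∀ a ∈ T, ∀ b ∈ T, a ≠ b → Disjoint (B a) (B b) := by
    intro a ha b hb hab
    rw [Finset.disjoint_left]
    intro σ hσa hσb
    rw [hB, Finset.mem_filter] at hσa hσb
    rcases lt_or_gt_of_ne (fun h : (a : ℕ) = (b : ℕ) => hab (Fin.ext h)) with h | h
    · exact key σ a b h (by simpa [hT] using hb) hσa.2.2 hσb.2.2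
    · exact key σ b a h (by simpa [hT] using ha) hσb.2.2 hσa.2.2
  have hsub : T.biUnion B ⊆ A := by
    intro σ hσ
    rw [Finset.mem_biUnion] at hσ
    rcases hσ with ⟨m, _, hσ⟩
    rw [hB, Finset.mem_filter] at hσ
    rw [hA, Finset.mem_filter]
    exact ⟨mem_univ _, hσ.2.1⟩
  have hW : (univ.filter fun σ : Equiv.Perm (Fin N) => WinD0 N K σ ∧ (σ p : ℕ) = 0)
      = A \ T.biUnion B := by
    ext σ
    rw [Finset.mem_filter, Finset.mem_sdiff, Finset.mem_biUnion, hA, Finset.mem_filter]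
    constructor
    · rintro ⟨-, hw, hp0⟩
      refine ⟨⟨mem_univ _, hp0⟩, ?_⟩
      rintro ⟨m, hmT, hmB⟩
      rw [hB, Finset.mem_filter] at hmB
      rw [hT, Finset.mem_filter] at hmT
      exact ((winChar hK σ p hp0).1 hw m hmT.2) hmB.2.2
    · rintro ⟨⟨-, hp0⟩, hnot⟩
      refine ⟨mem_univ _, ?_, hp0⟩
      rw [winChar hK σ p hp0]
      intro m hm hc
      exact hnot ⟨m, by rw [hT, Finset.mem_filter]; exact ⟨mem_univ _, hm⟩,
        by rw [hB, Finset.mem_filter]; exact ⟨mem_univ _, hp0, hc⟩⟩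
  rw [hW, Finset.card_sdiff_of_subset hsub, Finset.card_biUnion hdisj,
    Nat.sub_add_cancel (le_trans (le_of_eq (Finset.card_biUnion hdisj).symm)
      (Finset.card_le_card hsub))]

set_option maxHeartbeats 1000000 in
open scoped Classical in
/-- Best-1 sliding-window secretary problem with window size `K ≥ N/2` and threshold
`d = 0`: the probability of winning equals
`K/N + (1/N)·Σ_{j=K+1}^{N} (1 − Σ_{m=1}^{j-K} 1/(m+K−1))`. -/
theorem stmt6 (N K : ℕ) (hK1 : 1 ≤ K) (hKN : K ≤ N) (h2K : N ≤ 2 * K) :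
    ((Finset.univ.filter (fun σ : Equiv.Perm (Fin N) => WinD0 N K σ)).card : ℚ)
        / (Nat.factorial N)
      = (K : ℚ) / (N : ℚ) + (1 / (N : ℚ)) *
          ∑ j ∈ Finset.Icc (K + 1) N,
            (1 - ∑ m ∈ Finset.Icc 1 (j - K), 1 / ((m : ℚ) + (K : ℚ) - 1)) := by
  classical
  have hN : 0 < N := lt_of_lt_of_le hK1 hKN
  have hNq : (N : ℚ) ≠ 0 := Nat.cast_ne_zero.2 hN.ne'
  have hF : (N.factorial : ℚ) ≠ 0 := Nat.cast_ne_zero.2 (Nat.factorial_pos N).ne'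
  have hdiv : ∀ (a c : ℕ), a * c = N.factorial → 0 < a →
      (c : ℚ) / (N.factorial : ℚ) = 1 / (a : ℚ) := by
    intro a c h ha
    have h' : (a : ℚ) * c = N.factorial := by exact_mod_cast h
    have ha' : (a : ℚ) ≠ 0 := Nat.cast_ne_zero.2 ha.ne'
    field_simp
    linarith [h']
  -- step 1 : fiber over the position of rank 0
  have hfib : (Finset.univ.filter (fun σ : Equiv.Perm (Fin N) => WinD0 N K σ)).card
      = ∑ p : Fin N, (univ.filter fun σ : Equiv.Perm (Fin N) =>
          WinD0 N K σ ∧ (σ p : ℕ) = 0).card := by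
    have h0 : (Finset.univ.filter (fun σ : Equiv.Perm (Fin N) => WinD0 N K σ)).card
        = ∑ p : Fin N, ((Finset.univ.filter (fun σ : Equiv.Perm (Fin N) => WinD0 N K σ)).filter
            fun σ => σ.symm ⟨0, hN⟩ = p).card :=
      Finset.card_eq_sum_card_fiberwise (fun σ _ => mem_univ _)
    rw [h0]
    apply Finset.sum_congr rfl
    intro p _
    rw [Finset.filter_filter]
    apply card_filter_iff
    intro σ
    constructor
    · rintro ⟨hw, he⟩
      refine ⟨hw, ?_⟩
      rw [Equiv.symm_apply_eq] at he
      rw [← he]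
    · rintro ⟨hw, h0'⟩
      refine ⟨hw, ?_⟩
      rw [Equiv.symm_apply_eq]
      exact Fin.ext h0'.symm
  -- step 2 : per-position rational value
  have hper : ∀ p : Fin N,
      (((univ.filter fun σ : Equiv.Perm (Fin N) =>
          WinD0 N K σ ∧ (σ p : ℕ) = 0).card : ℚ) / (N.factorial : ℚ))
        = 1 / (N : ℚ)
          - ∑ i ∈ Finset.range ((p : ℕ) + 1 - K), 1 / ((N : ℚ) * ((i : ℚ) + (K : ℚ))) := by
    intro p
    have h1 := cardWp (N := N) hK1 h2K p
    have hA := cardA hN p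
    have hq1 : ((univ.filter fun σ : Equiv.Perm (Fin N) =>
        WinD0 N K σ ∧ (σ p : ℕ) = 0).card : ℚ)
        = ((univ.filter fun σ : Equiv.Perm (Fin N) => (σ p : ℕ) = 0).card : ℚ)
          - ∑ m ∈ univ.filter (fun m : Fin N => (m : ℕ) + K ≤ (p : ℕ)),
              ((univ.filter fun σ : Equiv.Perm (Fin N) =>
                (σ p : ℕ) = 0 ∧ IsCandidate N K σ m).card : ℚ) := by
      have h2 := congrArg (Nat.cast : ℕ → ℚ) h1
      push_cast at h2
      linarith
    rw [hq1, sub_div, Finset.sum_div, hdiv N _ hA hN]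
    congr 1
    have hpN := p.isLt
    refine Finset.sum_nbij' (i := fun m : Fin N => (m : ℕ))
      (j := fun i => if h : i < N then (⟨i, h⟩ : Fin N) else p) ?_ ?_ ?_ ?_ ?_
    · intro m hm
      rw [Finset.mem_filter] at hm
      beta_reduce
      rw [Finset.mem_range]
      omega
    · intro i hi
      rw [Finset.mem_range] at hi
      beta_reduce
      rw [dif_pos (by omega : i < N), Finset.mem_filter]
      refine ⟨mem_univ _, ?_⟩
      show i + K ≤ (p : ℕ)
      omega
    · intro m _
      beta_reduce
      simp [Fin.isLt]
    · intro i hi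
      rw [Finset.mem_range] at hi
      beta_reduce
      rw [dif_pos (by omega : i < N)]
    · intro m hm
      rw [Finset.mem_filter] at hm
      have hmK : (m : ℕ) + K ≤ (p : ℕ) := hm.2
      have hB := cardB (K := K) hK1 p m hmK
      have hNB : (N * ((m : ℕ) + K)) *
          (univ.filter fun σ : Equiv.Perm (Fin N) =>
            (σ p : ℕ) = 0 ∧ IsCandidate N K σ m).card = N.factorial := by
        rw [mul_assoc, hB, hA]
      have := hdiv _ _ hNB (by positivity)
      rw [this]
      push_cast
      ring
  -- step 3 : sum up
  rw [hfib]
  push_cast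
  rw [Finset.sum_div]
  calc (∑ p : Fin N, ((univ.filter fun σ : Equiv.Perm (Fin N) =>
          WinD0 N K σ ∧ (σ p : ℕ) = 0).card : ℚ) / (N.factorial : ℚ))
      = ∑ p : Fin N, (1 / (N : ℚ)
          - ∑ i ∈ Finset.range ((p : ℕ) + 1 - K), 1 / ((N : ℚ) * ((i : ℚ) + (K : ℚ)))) :=
        Finset.sum_congr rfl (fun p _ => hper p)
    _ = ∑ p ∈ Finset.range N, (1 / (N : ℚ)
          - ∑ i ∈ Finset.range (p + 1 - K), 1 / ((N : ℚ) * ((i : ℚ) + (K : ℚ)))) := by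
        rw [← Fin.sum_univ_eq_sum_range (fun p => 1 / (N : ℚ)
          - ∑ i ∈ Finset.range (p + 1 - K), 1 / ((N : ℚ) * ((i : ℚ) + (K : ℚ)))) N]
    _ = (K : ℚ) / (N : ℚ) + (1 / (N : ℚ)) *
          ∑ j ∈ Finset.Icc (K + 1) N,
            (1 - ∑ m ∈ Finset.Icc 1 (j - K), 1 / ((m : ℚ) + (K : ℚ) - 1)) := by
        rw [← Finset.sum_range_add_sum_Ico _ hKN]
        congr 1
        · rw [Finset.sum_congr rfl (g := fun _ => 1 / (N : ℚ)) (fun p hp => by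
            rw [Finset.mem_range] at hp
            rw [Nat.sub_eq_zero_of_le (by omega), Finset.range_zero, Finset.sum_empty,
              sub_zero]), Finset.sum_const, Finset.card_range, nsmul_eq_mul, mul_one_div]
        · rw [Finset.mul_sum]
          refine Finset.sum_nbij' (i := fun p => p + 1) (j := fun j => j - 1) ?_ ?_ ?_ ?_ ?_
          · intro p hp
            rw [Finset.mem_Ico] at hp
            beta_reduce
            rw [Finset.mem_Icc]
            omega
          · intro j hj
            rw [Finset.mem_Icc] at hj
            beta_reduce
            rw [Finset.mem_Ico]
            omega
          · intro p _
            show p + 1 - 1 = p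
            omega
          · intro j hj
            rw [Finset.mem_Icc] at hj
            show j - 1 + 1 = j
            omega
          · intro p hp
            rw [Finset.mem_Ico] at hp
            have hinner : ∑ m ∈ Finset.Icc 1 (p + 1 - K), 1 / ((m : ℚ) + (K : ℚ) - 1)
                = ∑ i ∈ Finset.range (p + 1 - K), 1 / ((i : ℚ) + (K : ℚ)) := by
              rw [← Finset.Ico_add_one_right_eq_Icc, Finset.sum_Ico_eq_sum_range]
              refine Finset.sum_congr (by norm_num) (fun i _ => ?_)
              congr 1
              push_cast
              ring
            beta_reduce
            rw [hinner, mul_sub, mul_one, Finset.mul_sum]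
            congr 1
            refine Finset.sum_congr rfl (fun i _ => ?_)
            rw [one_div_mul_one_div]
end

section
/- For x ∈ (1/2, 1]: x + ∫_x^1 (1 − ∫_0^{z−x} 1/(x+y) dy) dz = 2 − x + ln x. -/
/-- For `x ∈ (1/2, 1]`:
`x + ∫_x^1 (1 − ∫_0^{z−x} 1/(x+y) dy) dz = 2 − x + ln x`. -/
theorem stmt8 (x : ℝ) (hx : x ∈ Set.Ioc (1/2 : ℝ) 1) :
    x + ∫ z in x..(1 : ℝ), (1 - ∫ y in (0 : ℝ)..(z - x), 1 / (x + y))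
      = 2 - x + Real.log x := by
  obtain ⟨hx0, hx1⟩ := hx
  have hxpos : 0 < x := lt_trans (by norm_num) hx0
  have hinner : ∀ z ∈ Set.uIcc x (1:ℝ),
      (1 - ∫ y in (0:ℝ)..(z - x), 1 / (x + y)) = 1 - (Real.log z - Real.log x) := by
    intro z hz
    rw [Set.uIcc_of_le hx1] at hz
    have hz0 : 0 < z := lt_of_lt_of_le hxpos hz.1
    have h1 : (∫ y in (0:ℝ)..(z - x), 1 / (x + y)) = ∫ u in x..z, 1 / u := by
      have := intervalIntegral.integral_comp_add_left (a := (0:ℝ)) (b := z - x)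
        (fun u => 1 / u) x
      simpa using this
    rw [h1, integral_one_div (by
      rw [Set.uIcc_of_le hz.1]
      intro h; exact absurd h.1 (not_le.mpr hxpos))]
    rw [Real.log_div (ne_of_gt hz0) (ne_of_gt hxpos)]
  rw [intervalIntegral.integral_congr hinner]
  have hlog : IntervalIntegrable (fun z => Real.log z) MeasureTheory.volume x 1 :=
    (Real.continuousOn_log.mono (by
      intro u hu
      rw [Set.uIcc_of_le hx1] at hu
      exact ne_of_gt (lt_of_lt_of_le hxpos hu.1))).intervalIntegrable
  have hc : IntervalIntegrable (fun _ : ℝ => 1 + Real.log x) MeasureTheory.volume x 1 :=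
    intervalIntegrable_const
  have : (fun z : ℝ => 1 - (Real.log z - Real.log x))
      = fun z => (1 + Real.log x) - Real.log z := by ext z; ring
  rw [this, intervalIntegral.integral_sub hc hlog, intervalIntegral.integral_const,
    integral_log]
  simp only [smul_eq_mul, Real.log_one]
  ring
end

section
/- In the classical secretary problem with N applicants and threshold d (1 ≤ d < N), the probability of selecting the best applicant with the strategy 'reject the first d, then accept the first applicant better than all predecessors' equals (d/N) Σ_{j=d+1}^{N} 1/(j−1). -/
/-- In the classical secretary problem (0-indexed positions, smaller rank better),
position `m` is a *record* if its rank beats all earlier positions. -/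
def IsRecord (N : ℕ) (σ : Equiv.Perm (Fin N)) (m : Fin N) : Prop :=
  ∀ t : Fin N, (t : ℕ) < (m : ℕ) → σ m < σ t

/-- The strategy "reject the first `d`, then accept the first applicant better than all
predecessors" wins iff the first record at a position `≥ d` is the overall best. -/
def ClassicalWin (N d : ℕ) (σ : Equiv.Perm (Fin N)) : Prop :=
  ∃ m : Fin N, d ≤ (m : ℕ) ∧ IsRecord N σ m ∧ (σ m : ℕ) = 0 ∧
    ∀ m' : Fin N, d ≤ (m' : ℕ) → (m' : ℕ) < (m : ℕ) → ¬ IsRecord N σ m'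

open Equiv Finset
open scoped Classical

namespace Sec

variable {N : ℕ}

def lowSet (N k : ℕ) : Finset (Fin N) := Finset.univ.filter (fun t => (t : ℕ) < k)

lemma mem_lowSet {k : ℕ} {t : Fin N} : t ∈ lowSet N k ↔ (t : ℕ) < k := by
  simp [lowSet]

lemma card_lowSet {k : ℕ} (h : k ≤ N) : (lowSet N k).card = k := by
  have : lowSet N k = (Finset.range k).attachFin (fun m hm => lt_of_lt_of_le (Finset.mem_range.1 hm) h) := by
    ext t; simp [mem_lowSet]
  rw [this, Finset.card_attachFin, Finset.card_range]

/-- `p` is the strict argmin of `σ` over positions `< k`. -/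
def Amin (σ : Perm (Fin N)) (k : ℕ) (p : Fin N) : Prop :=
  (p : ℕ) < k ∧ ∀ t : Fin N, (t : ℕ) < k → t ≠ p → σ p < σ t

lemma Amin.unique {σ : Perm (Fin N)} {k : ℕ} {p q : Fin N}
    (hp : Amin σ k p) (hq : Amin σ k q) : p = q := by
  by_contra hne
  exact absurd (hp.2 q hq.1 (Ne.symm hne)) (not_lt.2 (hq.2 p hp.1 hne).le)

lemma lowSet_nonempty {k : ℕ} (hk : 1 ≤ k) (hkN : k ≤ N) : (lowSet N k).Nonempty :=
  ⟨⟨0, lt_of_lt_of_le hk hkN⟩, mem_lowSet.2 hk⟩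

noncomputable def aminF (σ : Perm (Fin N)) (k : ℕ) (hk : 1 ≤ k) (hkN : k ≤ N) : Fin N :=
  σ.symm (((lowSet N k).image σ).min' ((lowSet_nonempty hk hkN).image σ))

lemma amin_aminF (σ : Perm (Fin N)) (k : ℕ) (hk : 1 ≤ k) (hkN : k ≤ N) :
    Amin σ k (aminF σ k hk hkN) := by
  set v := ((lowSet N k).image σ).min' ((lowSet_nonempty hk hkN).image σ) with hv
  have hvmem : v ∈ (lowSet N k).image σ := Finset.min'_mem _ _
  obtain ⟨t, ht, hσt⟩ := Finset.mem_image.1 hvmem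
  have hft : aminF σ k hk hkN = t := by
    rw [aminF, ← hv, ← hσt, Equiv.symm_apply_apply]
  rw [hft]
  refine ⟨mem_lowSet.1 ht, fun t' ht' hne => ?_⟩
  have hle : v ≤ σ t' := Finset.min'_le _ _ (Finset.mem_image_of_mem σ (mem_lowSet.2 ht'))
  rw [← hσt] at hle
  exact lt_of_le_of_ne hle (fun h => hne (σ.injective h.symm))

lemma amin_iff_aminF {σ : Perm (Fin N)} {k : ℕ} (hk : 1 ≤ k) (hkN : k ≤ N) {p : Fin N} :
    Amin σ k p ↔ aminF σ k hk hkN = p := by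
  constructor
  · intro h; exact ((amin_aminF σ k hk hkN).unique h)
  · rintro rfl; exact amin_aminF σ k hk hkN

end Sec

namespace Sec

lemma card_fiber_val_eq (m v w : Fin N) :
    (univ.filter (fun σ : Perm (Fin N) => σ m = v)).card
      = (univ.filter (fun σ : Perm (Fin N) => σ m = w)).card := by
  apply Finset.card_bij' (fun σ _ => Equiv.swap v w * σ) (fun σ _ => Equiv.swap v w * σ)
  · intro σ hσ
    simp only [mem_filter, mem_univ, true_and] at hσ ⊢
    simp [hσ, Equiv.swap_apply_left]
  · intro σ hσ
    simp only [mem_filter, mem_univ, true_and] at hσ ⊢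
    simp [hσ, Equiv.swap_apply_right]
  · intro σ _; simp [← mul_assoc]
  · intro σ _; simp [← mul_assoc]

lemma card_fiber_val (hN : 0 < N) (m v : Fin N) :
    (univ.filter (fun σ : Perm (Fin N) => σ m = v)).card * N = Nat.factorial N := by
  have h1 : (univ : Finset (Perm (Fin N))).card
      = ∑ w : Fin N, (univ.filter (fun σ : Perm (Fin N) => σ m = w)).card := by
    apply Finset.card_eq_sum_card_fiberwise (fun σ _ => mem_univ (σ m))
  have h2 : ∀ w : Fin N, (univ.filter (fun σ : Perm (Fin N) => σ m = w)).card
      = (univ.filter (fun σ : Perm (Fin N) => σ m = v)).card :=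
    fun w => card_fiber_val_eq m w v
  rw [Finset.sum_congr rfl (fun w _ => h2 w), Finset.sum_const, smul_eq_mul] at h1
  rw [Finset.card_univ (α := Fin N), Fintype.card_fin] at h1
  have h3 : (univ : Finset (Perm (Fin N))).card = Nat.factorial N := by
    simp [Fintype.card_perm]
  rw [mul_comm, ← h1]
  simpa using h3

lemma amin_mul_swap {σ : Perm (Fin N)} {k : ℕ} {p q : Fin N}
    (hp : (p : ℕ) < k) (hq : (q : ℕ) < k) (h : Amin σ k p) :
    Amin (σ * Equiv.swap p q) k q := by
  by_cases hpq : p = q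
  · subst hpq; rw [Equiv.swap_self]; exact h
  refine ⟨hq, fun t ht hne => ?_⟩
  have h1 : (σ * Equiv.swap p q) q = σ p := by simp [Equiv.swap_apply_right]
  rw [h1]
  show σ p < σ (Equiv.swap p q t)
  rcases eq_or_ne t p with rfl | htp
  · rw [Equiv.swap_apply_left]
    exact h.2 q hq (Ne.symm hpq)
  · rw [Equiv.swap_apply_of_ne_of_ne htp hne]
    exact h.2 t ht htp

lemma card_fiber_amin_eq (z m : Fin N) {k : ℕ} (hkm : k ≤ (m : ℕ)) {p q : Fin N}
    (hp : (p : ℕ) < k) (hq : (q : ℕ) < k) :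
    (univ.filter (fun σ : Perm (Fin N) => σ m = z ∧ Amin σ k p)).card
      = (univ.filter (fun σ : Perm (Fin N) => σ m = z ∧ Amin σ k q)).card := by
  have hmp : m ≠ p := fun h => absurd hp (by rw [← h]; omega)
  have hmq : m ≠ q := fun h => absurd hq (by rw [← h]; omega)
  apply Finset.card_bij' (fun σ _ => σ * Equiv.swap p q) (fun σ _ => σ * Equiv.swap p q)
  · intro σ hσ
    simp only [mem_filter, mem_univ, true_and] at hσ ⊢
    constructor
    · show σ (Equiv.swap p q m) = z
      rw [Equiv.swap_apply_of_ne_of_ne hmp hmq]; exact hσ.1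
    · exact amin_mul_swap hp hq hσ.2
  · intro σ hσ
    simp only [mem_filter, mem_univ, true_and] at hσ ⊢
    constructor
    · show σ (Equiv.swap p q m) = z
      rw [Equiv.swap_apply_of_ne_of_ne hmp hmq]; exact hσ.1
    · have := amin_mul_swap hq hp hσ.2
      rwa [Equiv.swap_comm q p] at this
  · intro σ _; simp [mul_assoc]
  · intro σ _; simp [mul_assoc]

lemma sum_fiber_amin (z m : Fin N) {k : ℕ} (hk1 : 1 ≤ k) (hkN : k ≤ N) :
    ∑ p ∈ lowSet N k, (univ.filter (fun σ : Perm (Fin N) => σ m = z ∧ Amin σ k p)).card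
      = (univ.filter (fun σ : Perm (Fin N) => σ m = z)).card := by
  have h := Finset.card_eq_sum_card_fiberwise
    (s := univ.filter (fun σ : Perm (Fin N) => σ m = z)) (t := lowSet N k)
    (f := fun σ => aminF σ k hk1 hkN)
    (fun σ _ => mem_lowSet.2 (amin_aminF σ k hk1 hkN).1)
  rw [h]
  apply Finset.sum_congr rfl
  intro p _
  congr 1
  rw [Finset.filter_filter]
  apply Finset.filter_congr
  intro σ _
  rw [and_congr_right_iff]
  intro _
  exact (amin_iff_aminF hk1 hkN)

end Sec


namespace Sec

lemma win_iff {d : ℕ} (hd : 1 ≤ d) {σ : Perm (Fin N)} {m : Fin N} (hm : (σ m : ℕ) = 0) :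
    ClassicalWin N d σ ↔ (d ≤ (m : ℕ) ∧ ∃ p : Fin N, (p : ℕ) < d ∧ Amin σ (m : ℕ) p) := by
  constructor
  · rintro ⟨m', hdm', hrec, h0, hno⟩
    have hmm : m' = m := by
      apply σ.injective
      exact Fin.ext (by rw [h0, hm])
    subst hmm
    refine ⟨hdm', ?_⟩
    have h1 : 1 ≤ (m' : ℕ) := hd.trans hdm'
    have h2 : (m' : ℕ) ≤ N := m'.isLt.le
    set p := aminF σ (m' : ℕ) h1 h2 with hp
    have hap : Amin σ (m' : ℕ) p := amin_aminF σ _ h1 h2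
    refine ⟨p, ?_, hap⟩
    by_contra hpd
    push_neg at hpd
    apply hno p hpd hap.1
    intro t ht
    exact hap.2 t (ht.trans hap.1) (fun h => absurd (h ▸ ht) (lt_irrefl _))
  · rintro ⟨hdm, p, hpd, hap⟩
    refine ⟨m, hdm, ?_, hm, ?_⟩
    · intro t ht
      have : σ t ≠ σ m := fun h => absurd (σ.injective h ▸ ht) (lt_irrefl _)
      have : (σ t : ℕ) ≠ 0 := fun h => this (Fin.ext (by rw [h, hm]))
      exact Fin.lt_def.2 (by omega)
    · intro m' hdm' hm' hrec
      have h1 : σ m' < σ p := hrec p (hpd.trans_le hdm')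
      have h2 : σ p < σ m' := hap.2 m' hm' (fun h => absurd hpd (by rw [← h]; omega))
      exact absurd (h1.trans h2) (lt_irrefl _)

lemma card_win_fiber {d : ℕ} (hd : 1 ≤ d) (hdN : d < N) (z m : Fin N) (hz : (z : ℕ) = 0)
    (hm : d ≤ (m : ℕ)) :
    (univ.filter (fun σ : Perm (Fin N) => ClassicalWin N d σ ∧ σ m = z)).card
        * (m : ℕ) * N = d * Nat.factorial N := by
  have h1m : 1 ≤ (m : ℕ) := hd.trans hm
  have hmN : (m : ℕ) ≤ N := m.isLt.le
  -- rewrite the winning set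
  have hset : (univ.filter (fun σ : Perm (Fin N) => ClassicalWin N d σ ∧ σ m = z))
      = (univ.filter (fun σ : Perm (Fin N) => σ m = z ∧ ∃ p : Fin N, (p : ℕ) < d ∧ Amin σ (m : ℕ) p)) := by
    apply Finset.filter_congr
    intro σ _
    constructor
    · rintro ⟨hw, hz'⟩
      have h0 : (σ m : ℕ) = 0 := by rw [hz']; exact hz
      exact ⟨hz', ((win_iff hd h0).1 hw).2⟩
    · rintro ⟨hz', hex⟩
      have h0 : (σ m : ℕ) = 0 := by rw [hz']; exact hz
      exact ⟨(win_iff hd h0).2 ⟨hm, hex⟩, hz'⟩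
  rw [hset]
  -- split the ∃ p < d over lowSet N d
  have hsplit : (univ.filter (fun σ : Perm (Fin N) => σ m = z ∧ ∃ p : Fin N, (p : ℕ) < d ∧ Amin σ (m : ℕ) p)).card
      = ∑ p ∈ lowSet N d, (univ.filter (fun σ : Perm (Fin N) => σ m = z ∧ Amin σ (m : ℕ) p)).card := by
    have h := Finset.card_eq_sum_card_fiberwise
      (s := univ.filter (fun σ : Perm (Fin N) => σ m = z ∧ ∃ p : Fin N, (p : ℕ) < d ∧ Amin σ (m : ℕ) p))
      (t := lowSet N d) (f := fun σ => aminF σ (m : ℕ) h1m hmN) ?_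
    · rw [h]
      apply Finset.sum_congr rfl
      intro p hp
      congr 1
      rw [Finset.filter_filter]
      ext σ
      simp only [mem_filter, mem_univ, true_and]
      constructor
      · rintro ⟨⟨hz', _⟩, hf⟩
        exact ⟨hz', (amin_iff_aminF h1m hmN).2 hf⟩
      · rintro ⟨hz', ha⟩
        exact ⟨⟨hz', p, mem_lowSet.1 hp, ha⟩, (amin_iff_aminF h1m hmN).1 ha⟩
    · intro σ hσ
      simp only [Finset.mem_coe, mem_filter, mem_univ, true_and] at hσ ⊢
      obtain ⟨_, p, hpd, ha⟩ := hσ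
      rw [mem_lowSet]
      show ((aminF σ (m : ℕ) h1m hmN : Fin N) : ℕ) < d
      rw [(amin_iff_aminF h1m hmN).1 ha]
      exact hpd
  rw [hsplit]
  -- all fibers over p < m have the same cardinality
  set p0 : Fin N := ⟨0, by omega⟩ with hp0
  have hc0 : (p0 : ℕ) < d := hd
  have heq : ∀ p : Fin N, (p : ℕ) < (m : ℕ) →
      (univ.filter (fun σ : Perm (Fin N) => σ m = z ∧ Amin σ (m : ℕ) p)).card
        = (univ.filter (fun σ : Perm (Fin N) => σ m = z ∧ Amin σ (m : ℕ) p0)).card := by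
    intro p hp
    exact card_fiber_amin_eq z m le_rfl hp (by omega)
  set c := (univ.filter (fun σ : Perm (Fin N) => σ m = z ∧ Amin σ (m : ℕ) p0)).card with hc
  have hsum1 : ∑ p ∈ lowSet N d, (univ.filter (fun σ : Perm (Fin N) => σ m = z ∧ Amin σ (m : ℕ) p)).card
      = d * c := by
    rw [Finset.sum_congr rfl (fun p hp => heq p ((mem_lowSet.1 hp).trans_le hm)),
      Finset.sum_const, card_lowSet (hdN.le), smul_eq_mul]
  have hsum2 : (m : ℕ) * c = (univ.filter (fun σ : Perm (Fin N) => σ m = z)).card := by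
    rw [← sum_fiber_amin z m h1m hmN,
      Finset.sum_congr rfl (fun p hp => heq p (mem_lowSet.1 hp)),
      Finset.sum_const, card_lowSet hmN, smul_eq_mul]
  have hfib := card_fiber_val (by omega) m z
  rw [hsum1]
  calc d * c * (m : ℕ) * N = d * ((m : ℕ) * c * N) := by ring
  _ = d * Nat.factorial N := by rw [hsum2, hfib]

end Sec

set_option maxHeartbeats 1000000 in
open scoped Classical in
/-- Classical secretary problem with `N` applicants and threshold `d` (`1 ≤ d < N`): the
probability of selecting the best applicant equals `(d/N)·Σ_{j=d+1}^{N} 1/(j−1)`. -/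
theorem stmt10 (N d : ℕ) (hd : 1 ≤ d) (hdN : d < N) :
    ((Finset.univ.filter (fun σ : Equiv.Perm (Fin N) => ClassicalWin N d σ)).card : ℚ)
        / (Nat.factorial N)
      = ((d : ℚ) / (N : ℚ)) * ∑ j ∈ Finset.Icc (d + 1) N, 1 / ((j : ℚ) - 1) := by
  have hN : 0 < N := by omega
  set z : Fin N := ⟨0, hN⟩ with hzdef
  have hz : (z : ℕ) = 0 := rfl
  have hsplit : (Finset.univ.filter (fun σ : Equiv.Perm (Fin N) => ClassicalWin N d σ)).card
      = ∑ m : Fin N, (Finset.univ.filter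
          (fun σ : Equiv.Perm (Fin N) => ClassicalWin N d σ ∧ σ m = z)).card := by
    have h : (Finset.univ.filter (fun σ : Equiv.Perm (Fin N) => ClassicalWin N d σ)).card
        = ∑ m ∈ (Finset.univ : Finset (Fin N)),
          ((Finset.univ.filter (fun σ : Equiv.Perm (Fin N) => ClassicalWin N d σ)).filter
            (fun σ => σ.symm z = m)).card :=
      Finset.card_eq_sum_card_fiberwise (fun σ _ => Finset.mem_univ _)
    rw [h]
    apply Finset.sum_congr rfl
    intro m _
    congr 1
    rw [Finset.filter_filter]
    apply Finset.filter_congr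
    intro σ _
    rw [and_congr_right_iff]
    intro _
    constructor
    · intro h'; rw [← h', Equiv.apply_symm_apply]
    · intro h'; rw [← h', Equiv.symm_apply_apply]
  have hfact : (Nat.factorial N : ℚ) ≠ 0 := by positivity
  have hNQ : (N : ℚ) ≠ 0 := by positivity
  have hterm : ∀ m : Fin N,
      ((Finset.univ.filter (fun σ : Equiv.Perm (Fin N) => ClassicalWin N d σ ∧ σ m = z)).card : ℚ)
        / (Nat.factorial N)
      = if d ≤ (m : ℕ) then (d : ℚ) / ((m : ℕ) * N) else 0 := by
    intro m
    by_cases hm : d ≤ (m : ℕ)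
    · rw [if_pos hm]
      have hkey := Sec.card_win_fiber hd hdN z m hz hm
      have hmQ : ((m : ℕ) : ℚ) ≠ 0 := by
        have : 1 ≤ (m : ℕ) := hd.trans hm
        positivity
      have hc := congrArg (fun n : ℕ => (n : ℚ)) hkey
      push_cast at hc
      rw [div_eq_div_iff hfact (mul_ne_zero hmQ hNQ)]
      linear_combination hc
    · rw [if_neg hm]
      have : (Finset.univ.filter
          (fun σ : Equiv.Perm (Fin N) => ClassicalWin N d σ ∧ σ m = z)) = ∅ := by
        apply Finset.filter_eq_empty_iff.2
        rintro σ _ ⟨hw, hz'⟩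
        have h0 : (σ m : ℕ) = 0 := by rw [hz', hz]
        exact hm ((Sec.win_iff hd h0).1 hw).1
      rw [this]
      simp
  rw [hsplit]
  push_cast
  rw [Finset.sum_div]
  rw [Finset.sum_congr rfl (fun m _ => hterm m)]
  have hrange : ∑ m : Fin N, (if d ≤ (m : ℕ) then (d : ℚ) / ((m : ℕ) * N) else 0)
      = ∑ i ∈ Finset.range N, (if d ≤ i then (d : ℚ) / (i * N) else 0) :=
    Fin.sum_univ_eq_sum_range (fun i => if d ≤ i then (d : ℚ) / (i * N) else 0) N
  rw [hrange, ← Finset.sum_filter]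
  have hIco : (Finset.range N).filter (fun i => d ≤ i) = Finset.Ico d N := by
    ext i
    simp only [Finset.mem_filter, Finset.mem_range, Finset.mem_Ico]
    omega
  rw [hIco, Finset.mul_sum]
  apply Finset.sum_nbij' (i := fun i => i + 1) (j := fun j => j - 1)
  · intro a ha
    simp only [Finset.mem_Ico] at ha
    simp only [Finset.mem_Icc]
    omega
  · intro b hb
    simp only [Finset.mem_Icc] at hb
    simp only [Finset.mem_Ico]
    omega
  · intro a _; omega
  · intro b hb
    simp only [Finset.mem_Icc] at hb
    omega
  · intro a ha
    simp only [Finset.mem_Ico] at ha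
    have ha1 : 1 ≤ a := hd.trans ha.1
    have haQ : (a : ℚ) ≠ 0 := by positivity
    push_cast
    rw [add_sub_cancel_right, div_mul_div_comm, mul_one, mul_comm (N : ℚ) (a : ℚ)]
end
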